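/- arXiv:1703.09378 — 5 statements merged into one kernel-verified Lean document; each statement's English description precedes it below -/
import Mathlib

section
/- Let k ≥ 2 and n ≥ 3 be integers and let C_n be the cycle graph on n vertices. (i) If n ≤ 2k−2, then C_n is not k-color connectable. (ii) If n = 2k−1, then cc_k(C_n) = 2k−1. (iii) If n ≥ 2k, then cc_k(C_n) = k. -/
open SimpleGraph

/-- `c` is a `k`-color connecting edge-coloring of `G`: between every pair of distinct
vertices there is a path whose edges use at least `k` different colors. -/
def SimpleGraph.IsKColorConnecting {V : Type*} (G : SimpleGraph V) (k : ℕ)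
    (c : Sym2 V → ℕ) : Prop :=
  ∀ u v : V, u ≠ v → ∃ p : G.Walk u v, p.IsPath ∧ k ≤ (p.edges.map c).toFinset.card

/-- `G` is `k`-color connectable: it admits a `k`-color connecting coloring. -/
def SimpleGraph.KColorConnectable {V : Type*} (G : SimpleGraph V) (k : ℕ) : Prop :=
  ∃ c : Sym2 V → ℕ, G.IsKColorConnecting k c

/-- The `k`-color connection number `cc_k(G)`: the minimum number of colors used on the
edges of `G` by a `k`-color connecting coloring. -/
noncomputable def SimpleGraph.ccConn {V : Type*} (G : SimpleGraph V) (k : ℕ) : ℕ :=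
  sInf {n : ℕ | ∃ c : Sym2 V → ℕ, G.IsKColorConnecting k c ∧ (c '' G.edgeSet).ncard = n}

namespace CycleAux

open Fin.NatCast Fin.CommRing

variable {m : ℕ}

/- ## Fin arithmetic helpers -/

lemma val_add_natCast (u : Fin (m+3)) (i : ℕ) :
    (u + (i : Fin (m+3))).val = (u.val + i) % (m+3) := by
  rw [Fin.add_def, Fin.val_natCast, Nat.add_mod u.val i, Nat.mod_eq_of_lt u.isLt]

lemma val_add_natCast_of_lt {u : Fin (m+3)} {i : ℕ} (h : u.val + i < m + 3) :
    (u + (i : Fin (m+3))).val = u.val + i := by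
  rw [val_add_natCast, Nat.mod_eq_of_lt h]

lemma natCast_inj {i j : ℕ} (hi : i < m+3) (hj : j < m+3)
    (h : (i : Fin (m+3)) = j) : i = j := by
  have := congrArg Fin.val h
  simpa [Nat.mod_eq_of_lt, hi, hj] using this

lemma two_ne_zero' : (2 : Fin (m+3)) ≠ 0 := by simp [Fin.ext_iff]; rw [Nat.mod_eq_of_lt (by omega)]; omega

lemma val_sub_one {x : Fin (m+3)} (h : x ≠ 0) : (x - 1).val = x.val - 1 := by
  have hx : 1 ≤ x.val := Nat.one_le_iff_ne_zero.mpr (fun h0 => h (Fin.ext (by rw [h0]; rfl)))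
  rw [Fin.sub_def]
  simp only [Fin.val_one]
  have h2 : (m + 3 - 1 + x.val) = (m+3) + (x.val - 1) := by omega
  rw [h2, Nat.add_mod_left, Nat.mod_eq_of_lt (by omega)]

lemma val_sub_pos {x y : Fin (m+3)} (h : x ≠ y) : 1 ≤ (x - y).val := by
  rcases Nat.eq_zero_or_pos (x - y).val with h0 | h1
  · have : x - y = 0 := Fin.ext h0
    exact absurd (sub_eq_zero.mp this) h
  · exact h1

/-- The edge `s(u, u+1)` is an edge of the cycle graph. -/
lemma adj_succ (u : Fin (m+3)) : (cycleGraph (m+3)).Adj u (u+1) := by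
  rw [cycleGraph_adj]; right; simp

/- ## Walks along the cycle -/

/-- The walk `u, u+1, …, u+ℓ` in the cycle graph. -/
def walkAlong : (u : Fin (m+3)) → (ℓ : ℕ) → (cycleGraph (m+3)).Walk u (u + (ℓ : Fin (m+3)))
  | u, 0 => Walk.nil.copy rfl (by simp)
  | u, (ℓ+1) => (Walk.cons (adj_succ u) (walkAlong (u+1) ℓ)).copy rfl
      (by push_cast; ring)

lemma walkAlong_support (u : Fin (m+3)) (ℓ : ℕ) :
    (walkAlong u ℓ).support = (List.range (ℓ+1)).map (fun (i : ℕ) => u + (i : Fin (m+3))) := by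
  induction ℓ generalizing u with
  | zero => simp [walkAlong, List.range_succ]
  | succ ℓ ih =>
    rw [walkAlong, Walk.support_copy, Walk.support_cons, ih]
    conv_rhs => rw [List.range_succ_eq_map]
    simp only [List.map_cons, List.map_map]
    congr 1
    · simp
    · apply List.map_congr_left
      intro i _
      simp only [Function.comp_apply]
      push_cast
      ring

lemma walkAlong_edges (u : Fin (m+3)) (ℓ : ℕ) :
    (walkAlong u ℓ).edges =
      (List.range ℓ).map (fun (i : ℕ) => s(u + (i : Fin (m+3)), u + ((i+1 : ℕ) : Fin (m+3)))) := by
  induction ℓ generalizing u with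
  | zero => simp [walkAlong]
  | succ ℓ ih =>
    rw [walkAlong, Walk.edges_copy, Walk.edges_cons, ih, List.range_succ_eq_map,
      List.map_cons, List.map_map]
    congr 1
    · push_cast; simp
    · ext i
      simp
      constructor
      · rintro ⟨a, ha, rfl⟩
        exact ⟨a, ha, by rw [show u + ((a:Fin (m+3))+1) = u+1+a by ring,
          show u + ((a:Fin (m+3))+1+1) = u+1+(a+1) by ring]⟩
      · rintro ⟨a, ha, rfl⟩
        exact ⟨a, ha, by rw [show u + ((a:Fin (m+3))+1) = u+1+a by ring,
          show u + ((a:Fin (m+3))+1+1) = u+1+(a+1) by ring]⟩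

lemma walkAlong_isPath (u : Fin (m+3)) {ℓ : ℕ} (hℓ : ℓ < m + 3) :
    (walkAlong u ℓ).IsPath := by
  rw [Walk.isPath_def, walkAlong_support]
  refine List.Nodup.map_on ?_ List.nodup_range
  intro i hi j hj h
  rw [List.mem_range] at hi hj
  exact natCast_inj (by omega) (by omega) (add_left_cancel h)

/- ## The arc edge lists and the classification of paths in a cycle -/

/-- The list of edges of the forward arc from `u` to `v`. -/
def arcList (u v : Fin (m+3)) : List (Sym2 (Fin (m+3))) :=
  (List.range (v - u).val).map (fun (i : ℕ) => s(u + (i : Fin (m+3)), u + ((i+1 : ℕ) : Fin (m+3))))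

lemma mem_arcList {u v : Fin (m+3)} {e : Sym2 (Fin (m+3))} :
    e ∈ arcList u v ↔ ∃ i < (v - u).val, e = s(u + (i : Fin (m+3)), u + ((i+1 : ℕ) : Fin (m+3))) := by
  constructor
  · intro he
    obtain ⟨i, hi, rfl⟩ := List.mem_map.mp he
    exact ⟨i, List.mem_range.mp hi, rfl⟩
  · rintro ⟨i, hi, rfl⟩
    exact List.mem_map.mpr ⟨i, List.mem_range.mpr hi, rfl⟩

lemma arcList_length (u v : Fin (m+3)) : (arcList u v).length = (v - u).val := by
  rw [arcList, List.length_map, List.length_range]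

/-- Every path in the cycle graph stays within one of the two arcs. -/
lemma classify : ∀ {u v : Fin (m+3)} (p : (cycleGraph (m+3)).Walk u v), p.IsPath →
    (∀ e ∈ p.edges, e ∈ arcList u v) ∨ (∀ e ∈ p.edges, e ∈ arcList v u) := by
  intro u v p
  induction p with
  | nil => intro _; left; simp
  | @cons u w v h q ih =>
    intro hp
    have hq : q.IsPath := hp.of_cons
    have hu : u ∉ q.support := ((Walk.cons_isPath_iff h q).mp hp).2
    have huv : u ≠ v := fun he => hu (he ▸ q.end_mem_support)
    have hvu : v ≠ u := Ne.symm huv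
    have hvu1 : 1 ≤ (v - u).val := val_sub_pos hvu
    have huv1 : 1 ≤ (u - v).val := val_sub_pos huv
    have hadj := h
    rw [cycleGraph_adj] at hadj
    rcases hadj with h1 | h1
    · -- u - w = 1, i.e. w = u - 1
      have hw : w = u - 1 := by
        rw [sub_eq_iff_eq_add] at h1
        rw [h1]; ring
      subst hw
      rcases ih hq with hf | hb
      · -- forward from u-1: contradiction or nil
        cases q with
        | nil =>
          right
          intro e he
          simp only [Walk.edges_cons, Walk.edges_nil, List.mem_singleton] at he
          subst he
          rw [mem_arcList]
          refine ⟨0, val_sub_pos huv, ?_⟩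
          push_cast
          rw [add_zero, sub_add_cancel]
          exact Sym2.eq_swap
        | @cons _ x _ h' q' =>
          exfalso
          have hfe : s(u - 1, x) ∈ (Walk.cons h' q').edges := by simp
          have hadj' := h'
          rw [cycleGraph_adj] at hadj'
          rcases hadj' with h2 | h2
          · -- (u-1) - x = 1 → x = u - 2
            have hx : x = u - 1 - 1 := by
              rw [sub_eq_iff_eq_add] at h2
              rw [h2]; ring
            subst hx
            have hmem := hf _ hfe
            rw [mem_arcList] at hmem
            obtain ⟨i, hi, hei⟩ := hmem
            rw [Sym2.eq_iff] at hei
            have hiub : (v - (u-1)).val < m + 3 := Fin.is_lt _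
            rcases hei with ⟨he1, he2⟩ | ⟨he1, he2⟩
            · have hi0 : (i : Fin (m+3)) = 0 := by
                have := he1
                rwa [left_eq_add] at this
              have hieq : i = 0 := natCast_inj (m := m) (i := i) (j := 0) (by omega) (by omega) (by rw [hi0]; simp)
              subst hieq
              have h3 : u - 1 - 1 = u - 1 + 1 := by rw [he2]; norm_num
              have h5 : (2 : Fin (m+3)) = 0 := by
                calc (2 : Fin (m+3)) = (u - 1 + 1) - (u - 1 - 1) := by ring
                _ = (u - 1 - 1) - (u - 1 - 1) := by rw [h3]
                _ = 0 := by ring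
              exact two_ne_zero' h5
            · have : ((i+1 : ℕ) : Fin (m+3)) = 0 := by
                have := he1
                rwa [left_eq_add] at this
              have h6 := congrArg Fin.val this
              rw [Fin.val_natCast] at h6
              have h7 : (i + 1) % (m+3) = 0 := by simpa using h6
              have h8 : i + 1 < m + 3 := by omega
              rw [Nat.mod_eq_of_lt h8] at h7
              omega
          · -- x - (u-1) = 1 → x = u
            have hx : x = u := by
              rw [sub_eq_iff_eq_add] at h2
              rw [h2]; ring
            subst hx
            exact hu ((Walk.cons h' q').snd_mem_support_of_mem_edges hfe)
      · -- backward: right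
        right
        intro e he
        rw [Walk.edges_cons, List.mem_cons] at he
        have hkey : ((u-1) - v).val = (u - v).val - 1 := by
          have h9 : (u - 1) - v = (u - v) - 1 := by ring
          have h10 : u - v ≠ 0 := sub_ne_zero.mpr huv
          rw [h9, val_sub_one h10]
        rcases he with rfl | he
        · rw [mem_arcList]
          refine ⟨(u - 1 - v).val, ?_, ?_⟩
          · omega
          · rw [Fin.cast_val_eq_self]
            push_cast
            rw [show v + (u - 1 - v) = u - 1 by ring,
              show v + (u - 1 - v + 1) = u by ring]
            exact Sym2.eq_swap
        · obtain ⟨i, hi, rfl⟩ := mem_arcList.mp (hb _ he)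
          rw [mem_arcList]
          exact ⟨i, by omega, rfl⟩
    · -- w - u = 1, i.e. w = u + 1
      have hw : w = u + 1 := by
        rw [sub_eq_iff_eq_add] at h1
        rw [h1]; ring
      subst hw
      rcases ih hq with hf | hb
      · -- forward: left
        left
        intro e he
        rw [Walk.edges_cons, List.mem_cons] at he
        have hkey : (v - (u+1)).val = (v - u).val - 1 := by
          have h9 : v - (u + 1) = (v - u) - 1 := by ring
          have h10 : v - u ≠ 0 := sub_ne_zero.mpr hvu
          rw [h9, val_sub_one h10]
        rcases he with rfl | he
        · rw [mem_arcList]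
          refine ⟨0, by omega, ?_⟩
          norm_num
        · obtain ⟨i, hi, rfl⟩ := mem_arcList.mp (hf _ he)
          rw [mem_arcList]
          refine ⟨i + 1, by omega, ?_⟩
          push_cast
          rw [show u + ((i:Fin (m+3))+1) = u+1+i by ring,
            show u + ((i:Fin (m+3))+1+1) = u+1+(i+1) by ring]
      · -- backward from u+1: contradiction or nil
        cases q with
        | nil =>
          left
          intro e he
          simp only [Walk.edges_cons, Walk.edges_nil, List.mem_singleton] at he
          subst he
          rw [mem_arcList]
          refine ⟨0, hvu1, ?_⟩
          norm_num
        | @cons _ x _ h' q' =>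
          exfalso
          have hfe : s(u + 1, x) ∈ (Walk.cons h' q').edges := by simp
          have hadj' := h'
          rw [cycleGraph_adj] at hadj'
          rcases hadj' with h2 | h2
          · -- (u+1) - x = 1 → x = u
            have hx : x = u := by
              rw [sub_eq_iff_eq_add] at h2
              have h3 : x + 1 = u + 1 := by rw [h2]; ring
              exact add_right_cancel h3
            subst hx
            exact hu ((Walk.cons h' q').snd_mem_support_of_mem_edges hfe)
          · -- x = u + 2
            have hx : x = u + 1 + 1 := by
              rw [sub_eq_iff_eq_add] at h2
              rw [h2]; ring
            subst hx
            have hmem := hb _ hfe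
            rw [mem_arcList] at hmem
            obtain ⟨i, hi, hei⟩ := hmem
            rw [Sym2.eq_iff] at hei
            have hiub : ((u+1) - v).val < m + 3 := Fin.is_lt _
            rcases hei with ⟨he1, he2⟩ | ⟨he1, he2⟩
            · have h3 : (i : Fin (m+3)) = (u+1) - v := by rw [he1]; ring
              have h4 := congrArg Fin.val h3
              rw [Fin.val_natCast, Nat.mod_eq_of_lt (by omega)] at h4
              omega
            · have h5 : v + ((i:ℕ):Fin (m+3)) + 1 = u + 1 := by
                rw [he1]; push_cast; ring
              have h6 : v + ((i:ℕ):Fin (m+3)) = u + 1 + 1 := he2.symm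
              rw [h6] at h5
              have h7 : (2 : Fin (m+3)) = 0 := by
                calc (2 : Fin (m+3)) = (u + 1 + 1 + 1) - (u + 1) := by ring
                _ = (u + 1) - (u + 1) := by rw [h5]
                _ = 0 := by ring
              exact two_ne_zero' h7

lemma val_sub_add {u v : Fin (m+3)} (h : u ≠ v) :
    (u - v).val + (v - u).val = m + 3 := by
  have h0 : (u - v) + (v - u) = 0 := by ring
  have h1 := congrArg Fin.val h0
  rw [Fin.add_def] at h1
  simp only [Fin.val_zero] at h1
  have h2 : 1 ≤ (u - v).val := val_sub_pos h
  have h3 : 1 ≤ (v - u).val := val_sub_pos (Ne.symm h)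
  have h4 : (u - v).val < m + 3 := Fin.is_lt _
  have h5 : (v - u).val < m + 3 := Fin.is_lt _
  rcases lt_or_ge ((u - v).val + (v - u).val) (m+3) with hlt | hge
  · rw [Nat.mod_eq_of_lt hlt] at h1; omega
  · rw [Nat.mod_eq_sub_mod hge, Nat.mod_eq_of_lt (by omega)] at h1; omega

lemma sym2_succ_inj {a b : Fin (m+3)} (h : s(a, a+1) = s(b, b+1)) : a = b := by
  rw [Sym2.eq_iff] at h
  rcases h with ⟨h1, _⟩ | ⟨h1, h2⟩
  · exact h1
  · exfalso
    apply two_ne_zero' (m := m)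
    calc (2 : Fin (m+3)) = (b + 1 + 1) - b := by ring
    _ = (a + 1) - b := by rw [← h1]
    _ = b - b := by rw [h2]
    _ = 0 := by ring

lemma edgeSet_eq : (cycleGraph (m+3)).edgeSet
    = Set.range (fun u : Fin (m+3) => s(u, u+1)) := by
  apply Set.eq_of_subset_of_subset
  · intro e he
    induction e with
    | _ a b =>
      rw [mem_edgeSet, cycleGraph_adj] at he
      rcases he with h1 | h1
      · rw [sub_eq_iff_eq_add] at h1
        refine ⟨b, ?_⟩
        simp only
        rw [Sym2.eq_iff]
        exact Or.inr ⟨rfl, by rw [h1]; ring⟩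
      · rw [sub_eq_iff_eq_add] at h1
        refine ⟨a, ?_⟩
        simp only
        rw [Sym2.eq_iff]
        exact Or.inl ⟨rfl, by rw [h1]; ring⟩
  · rintro e ⟨u, rfl⟩
    exact adj_succ u

lemma ncard_edgeSet : ((cycleGraph (m+3)).edgeSet).ncard = m + 3 := by
  rw [edgeSet_eq, ← Set.image_univ,
    Set.ncard_image_of_injective _ (fun a b h => sym2_succ_inj h),
    Set.ncard_univ, Nat.card_eq_fintype_card, Fintype.card_fin]

/-- The index of an edge of the cycle graph. -/
noncomputable def edgeIdx (e : Sym2 (Fin (m+3))) : ℕ :=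
  sInf {i : ℕ | ∃ w : Fin (m+3), w.val = i ∧ e = s(w, w+1)}

lemma edgeIdx_eq (u : Fin (m+3)) : edgeIdx s(u, u+1) = u.val := by
  have h : {i : ℕ | ∃ w : Fin (m+3), w.val = i ∧ s(u, u+1) = s(w, w+1)} = {u.val} := by
    ext i
    constructor
    · rintro ⟨w, rfl, he⟩
      rw [sym2_succ_inj he]
      rfl
    · rintro rfl
      exact ⟨u, rfl, rfl⟩
  rw [edgeIdx, h, csInf_singleton]

/-- A walk from `u` to `v` whose edges are exactly the forward arc. -/
lemma exists_arc_walk (u v : Fin (m+3)) :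
    ∃ p : (cycleGraph (m+3)).Walk u v, p.IsPath ∧ p.edges = arcList u v := by
  have hend : u + (((v - u).val : ℕ) : Fin (m+3)) = v := by
    rw [Fin.cast_val_eq_self]; ring
  refine ⟨(walkAlong u (v - u).val).copy rfl hend, ?_, ?_⟩
  · rw [Walk.isPath_copy]
    exact walkAlong_isPath u (Fin.is_lt _)
  · rw [Walk.edges_copy, walkAlong_edges, arcList]

lemma colors_card_le {l L : List (Sym2 (Fin (m+3)))} (c : Sym2 (Fin (m+3)) → ℕ)
    (h : ∀ e ∈ l, e ∈ L) : (l.map c).toFinset.card ≤ L.length := by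
  have hsub : (l.map c).toFinset ⊆ (L.map c).toFinset := by
    intro x hx
    rw [List.mem_toFinset, List.mem_map] at hx ⊢
    obtain ⟨e, he, rfl⟩ := hx
    exact ⟨e, h e he, rfl⟩
  calc (l.map c).toFinset.card ≤ (L.map c).toFinset.card := Finset.card_le_card hsub
  _ ≤ (L.map c).length := List.toFinset_card_le _
  _ = L.length := List.length_map _


/- ## Part (i) -/

lemma not_connectable (k : ℕ) (hk : 2 ≤ k) (hsmall : m + 3 ≤ 2*k - 2) :
    ¬ (cycleGraph (m+3)).KColorConnectable k := by
  rintro ⟨c, hc⟩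
  set d := min (k-1) (m+2) with hd
  have hd1 : 1 ≤ d := by omega
  have hdlt : d < m + 3 := by omega
  have hne : (0 : Fin (m+3)) ≠ (d : Fin (m+3)) := by
    intro h
    have h2 := congrArg Fin.val h
    rw [Fin.val_natCast, Nat.mod_eq_of_lt hdlt] at h2
    simp at h2
    omega
  obtain ⟨p, hp, hcard⟩ := hc 0 d hne
  have hv0 : ((d : Fin (m+3)) - 0).val = d := by
    rw [sub_zero, Fin.val_natCast, Nat.mod_eq_of_lt hdlt]
  have h0v : ((0 : Fin (m+3)) - d).val = (m+3) - d := by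
    have := val_sub_add hne
    omega
  rcases classify p hp with harc | harc
  · have := colors_card_le c harc
    rw [arcList_length, hv0] at this
    omega
  · have := colors_card_le c harc
    rw [arcList_length, h0v] at this
    omega

/- ## Part (ii), upper bound -/

lemma card_colors_of_injective {c : Sym2 (Fin (m+3)) → ℕ} (hc : Function.Injective c)
    {u v : Fin (m+3)} {p : (cycleGraph (m+3)).Walk u v} (hp : p.IsPath) :
    (p.edges.map c).toFinset.card = p.length := by
  rw [List.toFinset_card_of_nodup (List.Nodup.map hc hp.edges_nodup), List.length_map,
    Walk.length_edges]

lemma conn_of_injective (k : ℕ) (hk : 2 ≤ k) (hn : m + 3 = 2*k - 1)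
    {c : Sym2 (Fin (m+3)) → ℕ} (hc : Function.Injective c) :
    (cycleGraph (m+3)).IsKColorConnecting k c := by
  intro u v huv
  by_cases hcase : k ≤ (v - u).val
  · obtain ⟨p, hp, hpe⟩ := exists_arc_walk u v
    refine ⟨p, hp, ?_⟩
    rw [card_colors_of_injective hc hp, ← Walk.length_edges, hpe, arcList_length]
    exact hcase
  · obtain ⟨p, hp, hpe⟩ := exists_arc_walk v u
    refine ⟨p.reverse, hp.reverse, ?_⟩
    rw [Walk.edges_reverse, List.map_reverse, List.toFinset_reverse,
      card_colors_of_injective hc hp, ← Walk.length_edges, hpe, arcList_length]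
    have := val_sub_add huv
    omega

/- ## Part (ii), lower bound -/

lemma no_collision (k : ℕ) (hk : 2 ≤ k) (hn : m + 3 = 2*k - 1)
    {c : Sym2 (Fin (m+3)) → ℕ} (hc : (cycleGraph (m+3)).IsKColorConnecting k c)
    (a : Fin (m+3)) (g : ℕ) (hg1 : 1 ≤ g) (hgk : g ≤ k - 1)
    (hcc : c s(a, a+1) = c s(a + (g : Fin (m+3)), a + (g : Fin (m+3)) + 1)) : False := by
  have hkn : k < m + 3 := by omega
  set v := a + (k : Fin (m+3)) with hv
  have hva : (v - a).val = k := by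
    rw [hv, add_sub_cancel_left, Fin.val_natCast, Nat.mod_eq_of_lt hkn]
  have hne : a ≠ v := by
    intro h
    have h2 : (v - a).val = 0 := by rw [← h, sub_self, Fin.val_zero]
    omega
  have hav : (a - v).val = k - 1 := by
    have := val_sub_add hne
    omega
  obtain ⟨p, hp, hcard⟩ := hc a v hne
  rcases classify p hp with harc | harc
  · set e₁ : Sym2 (Fin (m+3)) := s(a, a+1) with he₁
    set e₂ : Sym2 (Fin (m+3)) := s(a + (g : Fin (m+3)), a + (g : Fin (m+3)) + 1) with he₂
    have hm1 : e₁ ∈ arcList a v := mem_arcList.mpr ⟨0, by omega, by rw [he₁]; norm_num⟩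
    have hm2 : e₂ ∈ arcList a v := by
      refine mem_arcList.mpr ⟨g, by omega, ?_⟩
      rw [he₂]
      push_cast
      rw [add_assoc]
    have hne12 : e₁ ≠ e₂ := by
      intro h
      have h2 := sym2_succ_inj h
      have h3 : ((g:ℕ) : Fin (m+3)) = 0 := (left_eq_add.mp h2)
      have h4 := congrArg Fin.val h3
      rw [Fin.val_natCast, Nat.mod_eq_of_lt (by omega)] at h4
      simp at h4
      omega
    have hsub : (p.edges.map c).toFinset ⊆ ((arcList a v).toFinset.erase e₁).image c := by
      intro x hx
      rw [List.mem_toFinset, List.mem_map] at hx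
      obtain ⟨e, he, rfl⟩ := hx
      rw [Finset.mem_image]
      by_cases heq : e = e₁
      · refine ⟨e₂, Finset.mem_erase.mpr ⟨Ne.symm hne12, List.mem_toFinset.mpr hm2⟩, ?_⟩
        rw [heq]
        exact hcc.symm
      · exact ⟨e, Finset.mem_erase.mpr ⟨heq, List.mem_toFinset.mpr (harc e he)⟩, rfl⟩
    have hcard2 : (p.edges.map c).toFinset.card ≤ k - 1 := by
      calc (p.edges.map c).toFinset.card
          ≤ (((arcList a v).toFinset.erase e₁).image c).card := Finset.card_le_card hsub
      _ ≤ ((arcList a v).toFinset.erase e₁).card := Finset.card_image_le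
      _ = (arcList a v).toFinset.card - 1 :=
          Finset.card_erase_of_mem (List.mem_toFinset.mpr hm1)
      _ ≤ k - 1 := by
          have h3 := List.toFinset_card_le (arcList a v)
          rw [arcList_length, hva] at h3
          omega
    omega
  · have := colors_card_le c harc
    rw [arcList_length, hav] at this
    omega

lemma injOn_of_connecting (k : ℕ) (hk : 2 ≤ k) (hn : m + 3 = 2*k - 1)
    {c : Sym2 (Fin (m+3)) → ℕ} (hc : (cycleGraph (m+3)).IsKColorConnecting k c) :
    Set.InjOn c (cycleGraph (m+3)).edgeSet := by
  intro e₁ he₁ e₂ he₂ hcc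
  rw [edgeSet_eq] at he₁ he₂
  obtain ⟨x, rfl⟩ := he₁
  obtain ⟨y, rfl⟩ := he₂
  simp only at hcc ⊢
  by_contra hne
  have hxy : x ≠ y := fun h => hne (by rw [h])
  have hsum := val_sub_add hxy
  by_cases hgk : (y - x).val ≤ k - 1
  · apply no_collision k hk hn hc x ((y - x).val) (val_sub_pos (Ne.symm hxy)) hgk
    rw [Fin.cast_val_eq_self, show x + (y - x) = y from by ring]
    exact hcc
  · apply no_collision k hk hn hc y ((x - y).val) (val_sub_pos hxy) (by omega)
    rw [Fin.cast_val_eq_self, show y + (x - y) = x from by ring]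
    exact hcc.symm

/- ## Part (iii) -/

/-- The coloring by edge index modulo `k`. -/
noncomputable def cMod (k : ℕ) : Sym2 (Fin (m+3)) → ℕ := fun e => edgeIdx e % k

lemma exists_shift_mod (k a r : ℕ) (hk : 1 ≤ k) (hr : r < k) :
    ∃ i < k, (a + i) % k = r := by
  have hb := Nat.mod_lt a (show 0 < k by omega)
  refine ⟨if a % k ≤ r then r - a % k else r + k - a % k, by split <;> omega, ?_⟩
  rw [Nat.add_mod]
  split_ifs with h
  · rw [Nat.mod_eq_of_lt (show r - a % k < k by omega),
      show a % k + (r - a % k) = r by omega, Nat.mod_eq_of_lt hr]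
  · rw [Nat.mod_eq_of_lt (show r + k - a % k < k by omega),
      show a % k + (r + k - a % k) = r + k by omega, Nat.add_mod_right, Nat.mod_eq_of_lt hr]

lemma val_sub_of_le {u v : Fin (m+3)} (h : u.val ≤ v.val) : (v - u).val = v.val - u.val := by
  rw [Fin.sub_def]
  show (m + 3 - u.val + v.val) % (m+3) = v.val - u.val
  have h2 : (m + 3 - u.val + v.val) = (m+3) + (v.val - u.val) := by omega
  rw [h2, Nat.add_mod_left]
  exact Nat.mod_eq_of_lt (by omega)

lemma cMod_arc_mem (k : ℕ) {w z : Fin (m+3)} {i : ℕ} (hi : i < (z - w).val) {r : ℕ}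
    (hval : (w + (i : Fin (m+3))).val % k = r) :
    r ∈ ((arcList w z).map (cMod k)).toFinset := by
  rw [List.mem_toFinset, List.mem_map]
  refine ⟨s(w + (i : Fin (m+3)), w + ((i+1:ℕ) : Fin (m+3))), mem_arcList.mpr ⟨i, hi, rfl⟩, ?_⟩
  have hedge : s(w + (i : Fin (m+3)), w + ((i+1:ℕ) : Fin (m+3)))
      = s(w + (i : Fin (m+3)), (w + (i : Fin (m+3))) + 1) := by
    push_cast
    rw [add_assoc]
  rw [hedge]
  simp only [cMod, edgeIdx_eq]
  exact hval

lemma conn_mod (k : ℕ) (hk : 2 ≤ k) (hn : 2*k ≤ m + 3) :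
    (cycleGraph (m+3)).IsKColorConnecting k (cMod k) := by
  have key : ∀ u v : Fin (m+3), u.val < v.val →
      ∃ p : (cycleGraph (m+3)).Walk u v, p.IsPath ∧
        k ≤ (p.edges.map (cMod k)).toFinset.card := by
    intro u v hlt
    have hdval : (v - u).val = v.val - u.val := val_sub_of_le (le_of_lt hlt)
    by_cases hcase : k ≤ v.val - u.val
    · obtain ⟨p, hp, hpe⟩ := exists_arc_walk u v
      refine ⟨p, hp, ?_⟩
      rw [hpe]
      have hrange : Finset.range k ⊆ ((arcList u v).map (cMod k)).toFinset := by
        intro r hr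
        rw [Finset.mem_range] at hr
        obtain ⟨i, hik, hmod⟩ := exists_shift_mod k u.val r (by omega) hr
        refine cMod_arc_mem k (show i < (v - u).val by omega) ?_
        rw [val_add_natCast_of_lt (show u.val + i < m+3 by
          have := v.isLt; omega)]
        exact hmod
      calc k = (Finset.range k).card := (Finset.card_range k).symm
      _ ≤ _ := Finset.card_le_card hrange
    · obtain ⟨p, hp, hpe⟩ := exists_arc_walk v u
      refine ⟨p.reverse, hp.reverse, ?_⟩
      rw [Walk.edges_reverse, List.map_reverse, List.toFinset_reverse, hpe]
      have huv : u ≠ v := by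
        intro h
        rw [h] at hlt
        omega
      have hd : (u - v).val = (m+3) - (v.val - u.val) := by
        have h2 := val_sub_add huv
        omega
      have hrange : Finset.range k ⊆ ((arcList v u).map (cMod k)).toFinset := by
        intro r hr
        rw [Finset.mem_range] at hr
        by_cases hru : r < u.val
        · refine cMod_arc_mem k (i := (m+3) - v.val + r)
            (show (m+3) - v.val + r < (u - v).val by
              have := v.isLt; omega) ?_
          rw [val_add_natCast,
            show v.val + ((m+3) - v.val + r) = (m+3) + r by have := v.isLt; omega,
            Nat.add_mod_left, Nat.mod_eq_of_lt (show r < m+3 by omega),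
            Nat.mod_eq_of_lt (show r < k by omega)]
        · refine cMod_arc_mem k (i := r + k - v.val)
            (show r + k - v.val < (u - v).val by
              have := v.isLt; omega) ?_
          rw [val_add_natCast_of_lt (show v.val + (r + k - v.val) < m + 3 by
              have := v.isLt; omega),
            show v.val + (r + k - v.val) = r + k by omega,
            Nat.add_mod_right, Nat.mod_eq_of_lt hr]
      calc k = (Finset.range k).card := (Finset.card_range k).symm
      _ ≤ _ := Finset.card_le_card hrange
  intro u v huv
  rcases lt_trichotomy u.val v.val with h | h | h
  · exact key u v h
  · exact absurd (Fin.ext h) huv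
  · obtain ⟨p, hp, hcard⟩ := key v u h
    exact ⟨p.reverse, hp.reverse, by
      rwa [Walk.edges_reverse, List.map_reverse, List.toFinset_reverse]⟩

lemma ncard_cMod_image (k : ℕ) (hk : 1 ≤ k) (hkn : k ≤ m+3) :
    ((cMod (m := m) k) '' (cycleGraph (m+3)).edgeSet).ncard = k := by
  have himg : (cMod (m := m) k) '' (cycleGraph (m+3)).edgeSet = ↑(Finset.range k) := by
    rw [edgeSet_eq]
    ext r
    simp only [Set.mem_image, Set.mem_range, Finset.coe_range, Set.mem_Iio]
    constructor
    · rintro ⟨e, ⟨w, rfl⟩, rfl⟩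
      exact Nat.mod_lt _ (by omega)
    · intro hr
      refine ⟨s((⟨r, by omega⟩ : Fin (m+3)), (⟨r, by omega⟩ : Fin (m+3)) + 1),
        ⟨⟨r, by omega⟩, rfl⟩, ?_⟩
      simp only [cMod, edgeIdx_eq]
      exact Nat.mod_eq_of_lt hr
  rw [himg, Set.ncard_coe_finset, Finset.card_range]

/- ## Lower bound valid for all cases -/

lemma k_le_ncard (k : ℕ) {c : Sym2 (Fin (m+3)) → ℕ}
    (hc : (cycleGraph (m+3)).IsKColorConnecting k c) :
    k ≤ (c '' (cycleGraph (m+3)).edgeSet).ncard := by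
  have h01 : (0 : Fin (m+3)) ≠ 1 := by
    intro h
    have h2 := congrArg Fin.val h
    simp at h2
  obtain ⟨p, hp, hcard⟩ := hc 0 1 h01
  refine hcard.trans ?_
  have hsub : ↑(p.edges.map c).toFinset ⊆ c '' (cycleGraph (m+3)).edgeSet := by
    intro x hx
    rw [Finset.mem_coe, List.mem_toFinset, List.mem_map] at hx
    obtain ⟨e, he, rfl⟩ := hx
    exact ⟨e, p.edges_subset_edgeSet he, rfl⟩
  calc (p.edges.map c).toFinset.card
      = (↑(p.edges.map c).toFinset : Set ℕ).ncard := (Set.ncard_coe_finset _).symm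
  _ ≤ _ := Set.ncard_le_ncard hsub (Set.toFinite _)

end CycleAux

theorem stmt_0 (k n : ℕ) (hk : 2 ≤ k) (hn : 3 ≤ n) :
    (n ≤ 2 * k - 2 → ¬ (cycleGraph n).KColorConnectable k) ∧
    (n = 2 * k - 1 → (cycleGraph n).KColorConnectable k ∧
      (cycleGraph n).ccConn k = 2 * k - 1) ∧
    (2 * k ≤ n → (cycleGraph n).KColorConnectable k ∧ (cycleGraph n).ccConn k = k) := by
  obtain ⟨m, rfl⟩ : ∃ m, n = m + 3 := ⟨n - 3, by omega⟩
  refine ⟨fun hsmall => CycleAux.not_connectable k hk hsmall, fun hn2 => ?_, fun hn3 => ?_⟩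
  · -- n = 2k - 1
    obtain ⟨cinj, hcinj⟩ : ∃ c : Sym2 (Fin (m+3)) → ℕ, Function.Injective c :=
      countable_iff_exists_injective _ |>.mp inferInstance
    have hconn := CycleAux.conn_of_injective k hk hn2 hcinj
    refine ⟨⟨cinj, hconn⟩, ?_⟩
    have hmem : (m+3) ∈ {x : ℕ | ∃ c : Sym2 (Fin (m+3)) → ℕ,
        (cycleGraph (m+3)).IsKColorConnecting k c ∧
        (c '' (cycleGraph (m+3)).edgeSet).ncard = x} :=
      ⟨cinj, hconn, by
        rw [Set.ncard_image_of_injective _ hcinj, CycleAux.ncard_edgeSet]⟩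
    have hall : ∀ x ∈ {x : ℕ | ∃ c : Sym2 (Fin (m+3)) → ℕ,
        (cycleGraph (m+3)).IsKColorConnecting k c ∧
        (c '' (cycleGraph (m+3)).edgeSet).ncard = x}, x = m + 3 := by
      rintro x ⟨c, hcc, rfl⟩
      rw [Set.ncard_image_of_injOn (CycleAux.injOn_of_connecting k hk hn2 hcc),
        CycleAux.ncard_edgeSet]
    rw [SimpleGraph.ccConn,
      Set.eq_singleton_iff_unique_mem.mpr ⟨hmem, hall⟩, csInf_singleton]
    omega
  · -- n ≥ 2k
    have hconn := CycleAux.conn_mod k hk hn3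
    refine ⟨⟨_, hconn⟩, ?_⟩
    have hmem : k ∈ {x : ℕ | ∃ c : Sym2 (Fin (m+3)) → ℕ,
        (cycleGraph (m+3)).IsKColorConnecting k c ∧
        (c '' (cycleGraph (m+3)).edgeSet).ncard = x} :=
      ⟨_, hconn, CycleAux.ncard_cMod_image k (by omega) (by omega)⟩
    refine le_antisymm (Nat.sInf_le hmem) (le_csInf ⟨k, hmem⟩ ?_)
    rintro x ⟨c, hcc, rfl⟩
    exact CycleAux.k_le_ncard k hcc
end

section
/- For all integers n ≥ 3 and 1 ≤ k ≤ n, the wheel W_n satisfies cc_k(W_n) = k. -/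
set_option linter.unusedSectionVars false


open SimpleGraph

/-- The wheel `W n`: the cycle `C n` together with a new hub vertex (`none`) adjacent to
every vertex of the cycle. -/
def wheelGraph (n : ℕ) : SimpleGraph (Option (Fin n)) :=
  SimpleGraph.fromRel fun a b =>
    a = none ∨ ∃ x y : Fin n, a = some x ∧ b = some y ∧ (cycleGraph n).Adj x y


open Fin.NatCast Fin.CommRing

section
variable {n : ℕ} [NeZero n]

lemma fin_one_ne_zero' (h2 : 2 ≤ n) : (1 : Fin n) ≠ 0 := by
  intro h
  have := congrArg Fin.val h
  simp [Fin.val_one', Nat.mod_eq_of_lt (by omega : 1 < n)] at this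

lemma wheel_adj_hub (a : Fin n) : (wheelGraph n).Adj none (some a) := by
  rw [wheelGraph, fromRel_adj]
  exact ⟨by simp, Or.inl (Or.inl rfl)⟩

lemma cyc_adj_succ (h2 : 2 ≤ n) (a : Fin n) : (cycleGraph n).Adj a (a + 1) := by
  rw [cycleGraph_adj']
  right
  rw [add_sub_cancel_left]
  simp [Fin.val_one', Nat.mod_eq_of_lt (by omega : 1 < n)]

lemma wheel_adj_rim (h2 : 2 ≤ n) (a : Fin n) :
    (wheelGraph n).Adj (some a) (some (a + 1)) := by
  rw [wheelGraph, fromRel_adj]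
  refine ⟨?_, Or.inl (Or.inr ⟨a, a + 1, rfl, rfl, cyc_adj_succ h2 a⟩)⟩
  simp only [ne_eq, Option.some.injEq]
  intro h
  have := congrArg (fun x => x - a) h
  simp only [sub_self, add_sub_cancel_left] at this
  exact fin_one_ne_zero' h2 this.symm

end

section

variable {n : ℕ} [NeZero n] (h2 : 2 ≤ n)

/-- Rim segment walk from `a` forward `m` steps. -/
def seg (h2 : 2 ≤ n) : (a : Fin n) → (m : ℕ) → (wheelGraph n).Walk (some a) (some (a + (m : Fin n)))
  | a, 0 => SimpleGraph.Walk.nil.copy rfl (by simp)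
  | a, m+1 => SimpleGraph.Walk.cons (wheel_adj_rim h2 a)
      ((seg h2 (a+1) m).copy rfl (by push_cast; ring_nf))

lemma seg_support (a : Fin n) (m : ℕ) :
    (seg h2 a m).support = (List.range (m+1)).map (fun (j : ℕ) => some (a + (j : Fin n))) := by
  induction m generalizing a with
  | zero => rw [seg]; simp [List.range_succ]
  | succ m ih =>
      rw [seg, SimpleGraph.Walk.support_cons, SimpleGraph.Walk.support_copy, ih]
      conv_rhs => rw [List.range_succ_eq_map]
      simp only [List.map_cons, List.map_map, Nat.cast_zero, add_zero]
      refine congrArg _ (List.map_congr_left ?_)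
      intro j _
      simp only [Function.comp_apply, Option.some.injEq]
      push_cast
      ring

lemma seg_edges (a : Fin n) (m : ℕ) :
    (seg h2 a m).edges =
      (List.range m).map (fun (j : ℕ) => s(some (a + (j : Fin n)), some (a + (j : Fin n) + 1))) := by
  induction m generalizing a with
  | zero => rw [seg]; simp
  | succ m ih =>
      rw [seg, SimpleGraph.Walk.edges_cons, SimpleGraph.Walk.edges_copy, ih]
      conv_rhs => rw [List.range_succ_eq_map]
      simp only [List.map_cons, List.map_map, Nat.cast_zero, add_zero]
      refine congrArg _ (List.map_congr_left ?_)
      intro j _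
      simp only [Function.comp_apply]
      congr 2 <;> · push_cast; ring

lemma seg_support_nodup (a : Fin n) (m : ℕ) (hm : m ≤ n - 1) :
    (seg h2 a m).support.Nodup := by
  rw [seg_support]
  refine List.Nodup.map_on ?_ List.nodup_range
  intro i hi j hj hij
  simp only [List.mem_range] at hi hj
  simp only [Option.some.injEq, add_right_inj] at hij
  have := congrArg Fin.val hij
  rw [Fin.val_natCast, Fin.val_natCast, Nat.mod_eq_of_lt (by omega), Nat.mod_eq_of_lt (by omega)]
    at this
  exact this

end

/-- The coloring function on ordered pairs. -/
def wcf (n k : ℕ) [NeZero n] : Option (Fin n) → Option (Fin n) → ℕ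
  | none, none => 0
  | none, some i => min (i - 1).val (k - 1)
  | some i, none => min (i - 1).val (k - 1)
  | some i, some j =>
      (if j = i + 1 then min i.val (k - 1) else 0) + (if i = j + 1 then min j.val (k - 1) else 0)

lemma wcf_symm (n k : ℕ) [NeZero n] (u v : Option (Fin n)) : wcf n k u v = wcf n k v u := by
  cases u <;> cases v <;> simp [wcf] <;> exact Nat.add_comm _ _

/-- The coloring as a function on `Sym2`. -/
def wcol (n k : ℕ) [NeZero n] : Sym2 (Option (Fin n)) → ℕ :=
  Sym2.lift ⟨wcf n k, wcf_symm n k⟩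

section
variable {n k : ℕ} [NeZero n]

lemma wcol_spoke (i : Fin n) : wcol n k s(none, some i) = min (i - 1).val (k - 1) := rfl

lemma wcol_spoke' (i : Fin n) : wcol n k s(some i, none) = min (i - 1).val (k - 1) := rfl

lemma two_ne_zero_fin (h3 : 3 ≤ n) : (2 : Fin n) ≠ 0 := by
  intro h
  have := congrArg Fin.val h
  rw [show ((2 : Fin n)) = ((2 : ℕ) : Fin n) by push_cast; rfl, Fin.val_natCast,
    Nat.mod_eq_of_lt (by omega)] at this
  simp at this

lemma wcol_rim (h3 : 3 ≤ n) (i : Fin n) :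
    wcol n k s(some i, some (i + 1)) = min i.val (k - 1) := by
  have h1 : i + 1 = i + 1 := rfl
  have h2 : ¬ (i = i + 1 + 1) := by
    intro h
    apply two_ne_zero_fin h3
    have := congrArg (fun x => x - i) h
    simp only [sub_self] at this
    rw [show i + 1 + 1 - i = 2 by ring] at this
    exact this.symm
  show wcf n k (some i) (some (i + 1)) = _
  simp [wcf, h2]
end

section
variable {n : ℕ} [NeZero n]

lemma fin_neg_one_val : ((-1 : Fin n) : ℕ) = n - 1 := by
  have hpos : 0 < n := Nat.pos_of_ne_zero (NeZero.ne n)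
  have h : ((n - 1 : ℕ) : Fin n) = -1 := by
    have h0 : ((n - 1 : ℕ) : Fin n) + 1 = 0 := by
      rw [show ((1 : Fin n)) = ((1 : ℕ) : Fin n) by push_cast; rfl, ← Nat.cast_add,
        Nat.sub_add_cancel hpos, Fin.natCast_self]
    exact eq_neg_of_add_eq_zero_left h0
  rw [← h, Fin.val_natCast, Nat.mod_eq_of_lt (by omega)]

lemma fin_val_le_of_ne_neg_one {x : Fin n} (hx : x ≠ -1) : (x : ℕ) ≤ n - 2 := by
  have h1 : (x : ℕ) < n := x.isLt
  have h2 : (x : ℕ) ≠ n - 1 := by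
    intro h
    exact hx (Fin.ext (by rw [h, fin_neg_one_val]))
  omega

lemma fin_sub_ne_neg_one {a b : Fin n} (hab : a ≠ b) : a - b - 1 ≠ -1 := by
  intro h
  apply hab
  have h2 : a - b = 0 := by
    have := congrArg (fun x => x + 1) h
    simp only [neg_add_cancel, sub_add_cancel] at this
    exact this
  have := congrArg (fun x => x + b) h2
  simp only [sub_add_cancel, zero_add] at this
  exact this

lemma fin_sum_val (h3 : 3 ≤ n) {a b : Fin n} (hab : a ≠ b) :
    ((a - b - 1 : Fin n) : ℕ) + ((b - a - 1 : Fin n) : ℕ) = n - 2 := by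
  set x := a - b - 1 with hxd
  set y := b - a - 1 with hyd
  have hx : x ≠ -1 := fin_sub_ne_neg_one hab
  have hy : y ≠ -1 := fin_sub_ne_neg_one hab.symm
  have hx2 : (x : ℕ) ≤ n - 2 := fin_val_le_of_ne_neg_one hx
  have hy2 : (y : ℕ) ≤ n - 2 := fin_val_le_of_ne_neg_one hy
  have hsum : x + y + 2 = 0 := by rw [hxd, hyd]; ring
  have hcast : (((x : ℕ) + (y : ℕ) + 2 : ℕ) : Fin n) = 0 := by
    push_cast [Fin.cast_val_eq_self]
    exact hsum
  rw [Fin.natCast_eq_zero] at hcast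
  rcases hcast with ⟨c, hc⟩
  have hb1 : (x : ℕ) + (y : ℕ) + 2 ≤ 2 * n - 2 := by omega
  have hb2 : 2 ≤ (x : ℕ) + (y : ℕ) + 2 := by omega
  have hc1 : c = 1 := by
    rcases Nat.lt_or_ge c 1 with h | h
    · interval_cases c <;> omega
    rcases Nat.lt_or_ge c 2 with h' | h'
    · omega
    · exfalso
      have h2 : n * 2 ≤ n * c := Nat.mul_le_mul_left n h'
      omega
  rw [hc1, mul_one] at hc
  omega

end

section
variable {n : ℕ} [NeZero n]

lemma fin_eq_of_val_eq {x y : Fin n} (h : (x : ℕ) = (y : ℕ)) : x = y := Fin.ext h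

lemma seg_dichotomy (h3 : 3 ≤ n) {a b J : Fin n} (hab : a ≠ b) (hJa : J ≠ a) (hJb : J ≠ b) :
    ((J - b - 1 : Fin n) : ℕ) < ((a - b - 1 : Fin n) : ℕ) ∨
    ((J - a - 1 : Fin n) : ℕ) < ((b - a - 1 : Fin n) : ℕ) := by
  set d1 := ((a - b - 1 : Fin n) : ℕ) with hd1
  set d2 := ((b - a - 1 : Fin n) : ℕ) with hd2
  set e := ((J - b - 1 : Fin n) : ℕ) with he
  have hsum : d1 + d2 = n - 2 := fin_sum_val h3 hab
  have heb : e ≤ n - 2 := fin_val_le_of_ne_neg_one (fin_sub_ne_neg_one hJb)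
  have hed : e ≠ d1 := by
    intro h
    apply hJa
    have h' : (J - b - 1 : Fin n) = (a - b - 1 : Fin n) := fin_eq_of_val_eq (by rw [← he, ← hd1, h])
    have := congrArg (fun x => x + 1 + b) h'
    simp only [sub_add_cancel] at this
    exact this
  rcases Nat.lt_or_ge e d1 with h | h
  · exact Or.inl h
  have hgt : d1 < e := lt_of_le_of_ne h (Ne.symm hed)
  right
  have hcast : (J - a - 1 : Fin n) = ((e - d1 - 1 : ℕ) : Fin n) := by
    have h1 : (J - b - 1 : Fin n) = ((e : ℕ) : Fin n) := (Fin.cast_val_eq_self _).symm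
    have h2 : (a - b - 1 : Fin n) = ((d1 : ℕ) : Fin n) := (Fin.cast_val_eq_self _).symm
    have key : (J - a - 1 : Fin n) = (J - b - 1) - (a - b - 1) - 1 := by ring
    rw [key, h1, h2, ← Nat.cast_sub (by omega : d1 ≤ e),
      show ((1 : Fin n)) = ((1 : ℕ) : Fin n) by push_cast; rfl,
      ← Nat.cast_sub (by omega : 1 ≤ e - d1)]
  rw [hcast, Fin.val_natCast, Nat.mod_eq_of_lt (by omega)]
  omega

lemma rim_mem_seg (h2 : 2 ≤ n) (c0 : Fin n) (m : ℕ) (J : Fin n)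
    (hJ : ((J - c0 : Fin n) : ℕ) < m) :
    s(some J, some (J + 1)) ∈ (seg h2 c0 m).edges := by
  rw [seg_edges]
  refine List.mem_map.mpr ⟨((J - c0 : Fin n) : ℕ), List.mem_range.mpr hJ, ?_⟩
  rw [Fin.cast_val_eq_self, add_sub_cancel]

end

section
variable {n : ℕ} [NeZero n]

lemma fin_vadd1 (h2 : 2 ≤ n) {x : Fin n} (hx : (x : ℕ) + 1 < n) :
    ((x + 1 : Fin n) : ℕ) = (x : ℕ) + 1 := by
  rw [Fin.val_add, Fin.val_one', Nat.mod_eq_of_lt (by omega : 1 < n), Nat.mod_eq_of_lt hx]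

/-- The Hamiltonian path between rim vertices `a` and `b`. -/
def pairWalk (h2 : 2 ≤ n) (a b : Fin n) : (wheelGraph n).Walk (some a) (some b) :=
  (((seg h2 (b + 1) ((a - b - 1 : Fin n) : ℕ)).copy rfl
      (congrArg some (by rw [Fin.cast_val_eq_self]; ring))).reverse).append
    (SimpleGraph.Walk.cons ((wheel_adj_hub (b + 1)).symm)
      (SimpleGraph.Walk.cons (wheel_adj_hub (a + 1))
        ((seg h2 (a + 1) ((b - a - 1 : Fin n) : ℕ)).copy rfl
          (congrArg some (by rw [Fin.cast_val_eq_self]; ring)))))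

lemma pairWalk_support (h2 : 2 ≤ n) (a b : Fin n) :
    (pairWalk h2 a b).support =
      ((List.range (((a - b - 1 : Fin n) : ℕ) + 1)).map
        (fun (j : ℕ) => (some (b + 1 + (j : Fin n)) : Option (Fin n)))).reverse ++
      none :: (List.range (((b - a - 1 : Fin n) : ℕ) + 1)).map
        (fun (j : ℕ) => (some (a + 1 + (j : Fin n)) : Option (Fin n))) := by
  rw [pairWalk, SimpleGraph.Walk.support_append, SimpleGraph.Walk.support_reverse,
    SimpleGraph.Walk.support_copy, seg_support, SimpleGraph.Walk.support_cons,
    SimpleGraph.Walk.support_cons, SimpleGraph.Walk.support_copy, seg_support]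
  rfl

lemma pairWalk_edges (h2 : 2 ≤ n) (a b : Fin n) :
    (pairWalk h2 a b).edges =
      ((List.range ((a - b - 1 : Fin n) : ℕ)).map
        (fun (j : ℕ) => s((some (b + 1 + (j : Fin n)) : Option (Fin n)),
          some (b + 1 + (j : Fin n) + 1)))).reverse ++
      s(some (b + 1), none) :: s(none, some (a + 1)) ::
        (List.range ((b - a - 1 : Fin n) : ℕ)).map
          (fun (j : ℕ) => s((some (a + 1 + (j : Fin n)) : Option (Fin n)),
            some (a + 1 + (j : Fin n) + 1))) := by
  rw [pairWalk, SimpleGraph.Walk.edges_append, SimpleGraph.Walk.edges_reverse,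
    SimpleGraph.Walk.edges_copy, seg_edges, SimpleGraph.Walk.edges_cons,
    SimpleGraph.Walk.edges_cons, SimpleGraph.Walk.edges_copy, seg_edges]

lemma pairWalk_isPath (h3 : 3 ≤ n) (a b : Fin n) (hab : a ≠ b) :
    (pairWalk (by omega) a b).IsPath := by
  have h2 : 2 ≤ n := by omega
  rw [SimpleGraph.Walk.isPath_def, pairWalk_support]
  set d1 := ((a - b - 1 : Fin n) : ℕ) with hd1
  set d2 := ((b - a - 1 : Fin n) : ℕ) with hd2
  have hsum : d1 + d2 = n - 2 := fin_sum_val h3 hab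
  have hmapinj : ∀ (c0 : Fin n) (m : ℕ), m ≤ n - 1 →
      ((List.range (m + 1)).map
        (fun (j : ℕ) => (some (c0 + (j : Fin n)) : Option (Fin n)))).Nodup := by
    intro c0 m hm
    refine List.Nodup.map_on ?_ List.nodup_range
    intro i hi j hj hij
    simp only [List.mem_range] at hi hj
    simp only [Option.some.injEq, add_right_inj] at hij
    have := congrArg Fin.val hij
    rw [Fin.val_natCast, Fin.val_natCast, Nat.mod_eq_of_lt (by omega),
      Nat.mod_eq_of_lt (by omega)] at this
    exact this
  have hdisj : ∀ i ≤ d1, ∀ j ≤ d2, b + 1 + (i : Fin n) ≠ a + 1 + (j : Fin n) := by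
    intro i hi j hj h
    have hiv : ((i : Fin n) : ℕ) = i := by
      rw [Fin.val_natCast, Nat.mod_eq_of_lt (by omega)]
    have hab' : (a - b : Fin n) = ((d1 + 1 : ℕ) : Fin n) := by
      push_cast
      rw [Fin.cast_val_eq_self]
      ring
    have key : (i : Fin n) = ((d1 + 1 + j : ℕ) : Fin n) := by
      have h' : (i : Fin n) = (a - b) + (j : Fin n) := by linear_combination h
      rw [h', hab']
      push_cast
      ring
    have := congrArg Fin.val key
    rw [hiv, Fin.val_natCast, Nat.mod_eq_of_lt (by omega)] at this
    omega
  rw [List.nodup_append]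
  refine ⟨List.nodup_reverse.mpr (hmapinj _ _ (by omega)), ?_, ?_⟩
  · rw [List.nodup_cons]
    constructor
    · simp only [List.mem_map]
      rintro ⟨j, -, hj⟩
      cases hj
    · exact hmapinj _ _ (by omega)
  · intro x hx y hx2 hxy
    subst hxy
    rw [List.mem_reverse, List.mem_map] at hx
    rcases hx with ⟨i, hi, rfl⟩
    rw [List.mem_range] at hi
    rcases List.mem_cons.mp hx2 with h | h
    · cases h
    · rw [List.mem_map] at h
      rcases h with ⟨j, hj, hj2⟩
      rw [List.mem_range] at hj
      rw [Option.some.injEq] at hj2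
      exact hdisj i (by omega) j (by omega) hj2.symm

end

section
variable {n : ℕ} [NeZero n]

lemma fin_natCast_pred : ((n - 1 : ℕ) : Fin n) = -1 := by
  have hpos : 0 < n := Nat.pos_of_ne_zero (NeZero.ne n)
  have h0 : ((n - 1 : ℕ) : Fin n) + 1 = 0 := by
    rw [show ((1 : Fin n)) = ((1 : ℕ) : Fin n) by push_cast; rfl, ← Nat.cast_add,
      Nat.sub_add_cancel hpos, Fin.natCast_self]
  exact eq_neg_of_add_eq_zero_left h0

lemma pairWalk_colors (h3 : 3 ≤ n) {k : ℕ} (hk : 1 ≤ k) (hkn : k ≤ n) (a b : Fin n)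
    (hab : a ≠ b) (j : ℕ) (hj : j < k) :
    ∃ e ∈ (pairWalk (show 2 ≤ n by omega) a b).edges, wcol n k e = j := by
  have h2 : 2 ≤ n := by omega
  set J : Fin n := ⟨j, by omega⟩ with hJdef
  have hJv : (J : ℕ) = j := rfl
  have hmin : min j (k - 1) = j := by omega
  by_cases hJa : J = a
  · refine ⟨s(none, some (a + 1)), ?_, ?_⟩
    · rw [pairWalk_edges]
      exact List.mem_append_right _ (List.mem_cons_of_mem _ (List.mem_cons_self))
    · rw [wcol_spoke, add_sub_cancel_right, ← hJa, hJv, hmin]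
  · by_cases hJb : J = b
    · refine ⟨s(some (b + 1), none), ?_, ?_⟩
      · rw [pairWalk_edges]
        exact List.mem_append_right _ (List.mem_cons_self)
      · rw [wcol_spoke', add_sub_cancel_right, ← hJb, hJv, hmin]
    · refine ⟨s(some J, some (J + 1)), ?_, ?_⟩
      · rcases seg_dichotomy h3 hab hJa hJb with h | h
        · have hm := rim_mem_seg h2 (b + 1) ((a - b - 1 : Fin n) : ℕ) J
            (by rw [show (J - (b + 1) : Fin n) = J - b - 1 by ring]; exact h)
          rw [seg_edges] at hm
          rw [pairWalk_edges]
          exact List.mem_append_left _ (List.mem_reverse.mpr hm)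
        · have hm := rim_mem_seg h2 (a + 1) ((b - a - 1 : Fin n) : ℕ) J
            (by rw [show (J - (a + 1) : Fin n) = J - a - 1 by ring]; exact h)
          rw [seg_edges] at hm
          rw [pairWalk_edges]
          exact List.mem_append_right _
            (List.mem_cons_of_mem _ (List.mem_cons_of_mem _ hm))
      · rw [wcol_rim h3, hJv, hmin]

/-- The Hamiltonian path from the hub to rim vertex `b`. -/
def hubWalk (h2 : 2 ≤ n) (b : Fin n) : (wheelGraph n).Walk none (some b) :=
  SimpleGraph.Walk.cons (wheel_adj_hub (b + 1))
    ((seg h2 (b + 1) (n - 1)).copy rfl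
      (congrArg some (by rw [fin_natCast_pred]; ring)))

lemma hubWalk_isPath (h2 : 2 ≤ n) (b : Fin n) : (hubWalk h2 b).IsPath := by
  rw [SimpleGraph.Walk.isPath_def, hubWalk, SimpleGraph.Walk.support_cons,
    SimpleGraph.Walk.support_copy, List.nodup_cons]
  constructor
  · rw [seg_support]
    simp only [List.mem_map]
    rintro ⟨j, -, hj⟩
    cases hj
  · exact seg_support_nodup h2 _ _ le_rfl

lemma hubWalk_colors (h3 : 3 ≤ n) {k : ℕ} (hk : 1 ≤ k) (hkn : k ≤ n) (b : Fin n)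
    (j : ℕ) (hj : j < k) :
    ∃ e ∈ (hubWalk (show 2 ≤ n by omega) b).edges, wcol n k e = j := by
  have h2 : 2 ≤ n := by omega
  set J : Fin n := ⟨j, by omega⟩ with hJdef
  have hJv : (J : ℕ) = j := rfl
  have hmin : min j (k - 1) = j := by omega
  by_cases hJb : J = b
  · refine ⟨s(none, some (b + 1)), ?_, ?_⟩
    · rw [hubWalk, SimpleGraph.Walk.edges_cons]
      exact List.mem_cons_self
    · rw [wcol_spoke, add_sub_cancel_right, ← hJb, hJv, hmin]
  · refine ⟨s(some J, some (J + 1)), ?_, ?_⟩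
    · have hlt : ((J - (b + 1) : Fin n) : ℕ) < n - 1 := by
        have := fin_val_le_of_ne_neg_one
          (show (J - (b + 1) : Fin n) ≠ -1 by
            rw [show (J - (b + 1) : Fin n) = J - b - 1 by ring]
            exact fin_sub_ne_neg_one hJb)
        omega
      have hm := rim_mem_seg h2 (b + 1) (n - 1) J hlt
      rw [hubWalk, SimpleGraph.Walk.edges_cons, SimpleGraph.Walk.edges_copy]
      exact List.mem_cons_of_mem _ hm
    · rw [wcol_rim h3, hJv, hmin]

end

section
variable {n : ℕ} [NeZero n]

lemma wheel_adj_some (h2 : 2 ≤ n) {i j : Fin n}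
    (h : (wheelGraph n).Adj (some i) (some j)) : j = i + 1 ∨ i = j + 1 := by
  rw [wheelGraph, fromRel_adj] at h
  have hcyc : (cycleGraph n).Adj i j := by
    rcases h.2 with h' | h'
    · rcases h' with h' | ⟨x, y, hx, hy, hxy⟩
      · cases h'
      · rw [Option.some.injEq] at hx hy; subst hx; subst hy; exact hxy
    · rcases h' with h' | ⟨x, y, hx, hy, hxy⟩
      · cases h'
      · rw [Option.some.injEq] at hx hy; subst hx; subst hy; exact hxy.symm
  rw [cycleGraph_adj'] at hcyc
  have hone : ((1 : Fin n) : ℕ) = 1 := by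
    rw [Fin.val_one', Nat.mod_eq_of_lt (by omega)]
  rcases hcyc with h' | h'
  · right
    have : i - j = 1 := Fin.ext (by rw [h', hone])
    have := congrArg (fun x => x + j) this
    simp only [sub_add_cancel] at this
    rw [this, add_comm]
  · left
    have : j - i = 1 := Fin.ext (by rw [h', hone])
    have := congrArg (fun x => x + i) this
    simp only [sub_add_cancel] at this
    rw [this, add_comm]

lemma wcol_image (h3 : 3 ≤ n) {k : ℕ} (hk : 1 ≤ k) (hkn : k ≤ n) :
    wcol n k '' (wheelGraph n).edgeSet = Set.Iio k := by
  have h2 : 2 ≤ n := by omega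
  ext x
  constructor
  · rintro ⟨e, he, rfl⟩
    induction e with
    | _ u v =>
      rw [SimpleGraph.mem_edgeSet] at he
      match u, v with
      | none, none => exact absurd rfl he.ne
      | none, some i =>
          rw [wcol_spoke]
          exact Set.mem_Iio.mpr (by omega)
      | some i, none =>
          rw [wcol_spoke']
          exact Set.mem_Iio.mpr (by omega)
      | some i, some j =>
          rcases wheel_adj_some h2 he with h | h
          · subst h
            rw [wcol_rim h3]
            exact Set.mem_Iio.mpr (by omega)
          · subst h
            rw [Sym2.eq_swap, wcol_rim h3]
            exact Set.mem_Iio.mpr (by omega)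
  · intro hx
    rw [Set.mem_Iio] at hx
    set J : Fin n := ⟨x, by omega⟩ with hJdef
    refine ⟨s(some J, some (J + 1)), ((wheelGraph n).mem_edgeSet).mpr (wheel_adj_rim h2 J), ?_⟩
    rw [wcol_rim h3]
    show min x (k - 1) = x
    omega

end

theorem stmt_5 (n k : ℕ) (hn : 3 ≤ n) (hk : 1 ≤ k) (hkn : k ≤ n) :
    (wheelGraph n).KColorConnectable k ∧ (wheelGraph n).ccConn k = k := by
  haveI : NeZero n := ⟨by omega⟩
  have h2 : 2 ≤ n := by omega
  have cardOf : ∀ {x y : Option (Fin n)} (p : (wheelGraph n).Walk x y),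
      (∀ j < k, ∃ e ∈ p.edges, wcol n k e = j) →
      k ≤ ((p.edges.map (wcol n k)).toFinset.card) := by
    intro x y p hp
    have hsub : Finset.range k ⊆ (p.edges.map (wcol n k)).toFinset := by
      intro j hj
      rw [Finset.mem_range] at hj
      rcases hp j hj with ⟨e, he, hce⟩
      rw [List.mem_toFinset, List.mem_map]
      exact ⟨e, he, hce⟩
    calc k = (Finset.range k).card := (Finset.card_range k).symm
      _ ≤ _ := Finset.card_le_card hsub
  have hconn : (wheelGraph n).IsKColorConnecting k (wcol n k) := by
    intro u v huv
    match u, v with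
    | none, none => exact absurd rfl huv
    | none, some b =>
        exact ⟨hubWalk h2 b, hubWalk_isPath h2 b,
          cardOf _ (fun j hj => hubWalk_colors hn hk hkn b j hj)⟩
    | some b, none =>
        refine ⟨(hubWalk h2 b).reverse,
          (SimpleGraph.Walk.isPath_reverse_iff _).mpr (hubWalk_isPath h2 b),
          cardOf _ ?_⟩
        intro j hj
        rcases hubWalk_colors hn hk hkn b j hj with ⟨e, he, hce⟩
        exact ⟨e, by rw [SimpleGraph.Walk.edges_reverse, List.mem_reverse]; exact he, hce⟩
    | some a, some b =>
        have hab : a ≠ b := fun h => huv (by rw [h])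
        exact ⟨pairWalk h2 a b, pairWalk_isPath hn a b hab,
          cardOf _ (fun j hj => pairWalk_colors hn hk hkn a b hab j hj)⟩
  have himg : (wcol n k '' (wheelGraph n).edgeSet).ncard = k := by
    rw [wcol_image hn hk hkn, ← Finset.coe_Iio, Set.ncard_coe_finset, Nat.card_Iio]
  refine ⟨⟨wcol n k, hconn⟩, ?_⟩
  rw [SimpleGraph.ccConn]
  apply le_antisymm
  · exact Nat.sInf_le ⟨wcol n k, hconn, himg⟩
  · refine le_csInf ⟨k, wcol n k, hconn, himg⟩ ?_
    rintro m ⟨c, hc, rfl⟩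
    obtain ⟨p, hp, hcard⟩ := hc none (some 0) (by simp)
    have hsub : ((p.edges.map c).toFinset : Set ℕ) ⊆ c '' (wheelGraph n).edgeSet := by
      intro x hx
      rw [Finset.mem_coe, List.mem_toFinset, List.mem_map] at hx
      rcases hx with ⟨e, he, rfl⟩
      exact ⟨e, p.edges_subset_edgeSet he, rfl⟩
    calc k ≤ (p.edges.map c).toFinset.card := hcard
      _ = ((p.edges.map c).toFinset : Set ℕ).ncard := (Set.ncard_coe_finset _).symm
      _ ≤ (c '' (wheelGraph n).edgeSet).ncard :=
        Set.ncard_le_ncard hsub (Set.Finite.image _ (Set.toFinite _))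
end

section
/- Let k ≥ 2, let G be a finite connected simple graph, and let H be a subdivision of G. If G is k-color connectable, then H is k-color connectable and cc_k(H) ≤ cc_k(G). -/
open SimpleGraph

/-- The graph obtained from `G` by subdividing the edge `uv`: delete `uv` and add a new
vertex `none` joined to `u` and `v`. -/
def SimpleGraph.subdivideEdge {V : Type*} (G : SimpleGraph V) (u v : V) :
    SimpleGraph (Option V) :=
  ((G.deleteEdges {s(u, v)}).map Function.Embedding.some) ⊔
    SimpleGraph.fromEdgeSet {s(none, some u), s(none, some v)}

/-- `IsSubdivision G H` : `H` is (up to isomorphism) obtained from `G` by a finite,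
possibly empty, sequence of single-edge subdivisions. -/
inductive IsSubdivision : ∀ {V W : Type u}, SimpleGraph V → SimpleGraph W → Prop
  | of_iso {V W : Type u} {G : SimpleGraph V} {H : SimpleGraph W} :
      Nonempty (G ≃g H) → IsSubdivision G H
  | step {V W : Type u} {G : SimpleGraph V} {H : SimpleGraph W} (u v : V) (h : G.Adj u v) :
      IsSubdivision (G.subdivideEdge u v) H → IsSubdivision G H

section Aux

variable {V : Type*} {G : SimpleGraph V} {u v : V}

lemma subdiv_adj_some {a b : V} (ha : G.Adj a b) (hne : s(a, b) ≠ s(u, v)) :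
    (G.subdivideEdge u v).Adj (some a) (some b) := by
  rw [SimpleGraph.subdivideEdge, sup_adj, map_adj]
  exact Or.inl ⟨a, b, by simp [deleteEdges_adj, ha, hne], rfl, rfl⟩

lemma subdiv_adj_none {a : V} (ha : a = u ∨ a = v) :
    (G.subdivideEdge u v).Adj none (some a) := by
  rw [SimpleGraph.subdivideEdge, sup_adj, fromEdgeSet_adj]
  refine Or.inr ⟨?_, by simp⟩
  rcases ha with rfl | rfl
  · exact Set.mem_insert _ _
  · exact Set.mem_insert_iff.mpr (Or.inr rfl)

open Classical in
noncomputable def sdWalk (u v : V) :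
    ∀ {a b : V}, G.Walk a b → (G.subdivideEdge u v).Walk (some a) (some b)
  | _, _, .nil => .nil
  | a, b, .cons (v := x) h q =>
    if hx : s(a, x) = s(u, v) then
      .cons (subdiv_adj_none (by rw [Sym2.eq_iff] at hx; tauto)).symm
        (.cons (subdiv_adj_none (by rw [Sym2.eq_iff] at hx; tauto)) (sdWalk u v q))
    else
      .cons (subdiv_adj_some h hx) (sdWalk u v q)

open Classical in
noncomputable def sdColor (u v : V) (c : Sym2 V → ℕ) : Sym2 (Option V) → ℕ :=
  fun e => if none ∈ e then c s(u, v) else c (e.map (fun o => o.getD u))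

lemma sdColor_some (c : Sym2 V → ℕ) (a b : V) :
    sdColor u v c s(some a, some b) = c s(a, b) := by
  simp [sdColor]

lemma sdColor_none_left (c : Sym2 V → ℕ) (x : Option V) :
    sdColor u v c s(none, x) = c s(u, v) := by
  simp [sdColor]

lemma sdColor_none_right (c : Sym2 V → ℕ) (x : Option V) :
    sdColor u v c s(x, none) = c s(u, v) := by
  rw [Sym2.eq_swap]; exact sdColor_none_left c x

lemma sdWalk_colors (c : Sym2 V → ℕ) : ∀ {a b : V} (p : G.Walk a b),
    ((sdWalk u v p).edges.map (sdColor u v c)).toFinset = (p.edges.map c).toFinset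
  | _, _, .nil => rfl
  | a, b, .cons (v := x) h q => by
    rw [sdWalk]
    split
    · next hx =>
      simp only [Walk.edges_cons, List.map_cons, List.toFinset_cons,
        sdColor_none_left, sdColor_none_right, sdWalk_colors c q, hx]
      simp
    · next hx =>
      simp only [Walk.edges_cons, List.map_cons, List.toFinset_cons,
        sdColor_some, sdWalk_colors c q]

lemma mem_support_sdWalk : ∀ {a b x : V} (p : G.Walk a b),
    (some x ∈ (sdWalk u v p).support ↔ x ∈ p.support)
  | _, _, x, .nil => by simp [sdWalk]
  | a, b, x, .cons (v := y) h q => by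
    rw [sdWalk]
    split
    · simp [mem_support_sdWalk q]
    · simp [mem_support_sdWalk q]

lemma none_mem_support_sdWalk : ∀ {a b : V} (p : G.Walk a b),
    (none : Option V) ∈ (sdWalk u v p).support → s(u, v) ∈ p.edges
  | _, _, .nil => by simp [sdWalk]
  | a, b, .cons (v := y) h q => by
    rw [sdWalk]
    split
    · next hx => intro _; rw [Walk.edges_cons, hx]; exact List.mem_cons_self
    · next hx =>
      intro hmem
      rw [Walk.support_cons, List.mem_cons] at hmem
      rcases hmem with h' | h'
      · exact absurd h' (by simp)
      · exact List.mem_cons_of_mem _ (none_mem_support_sdWalk q h')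

lemma sdWalk_isPath : ∀ {a b : V} (p : G.Walk a b), p.IsPath → (sdWalk u v p).IsPath
  | _, _, .nil, _ => by rw [sdWalk]; exact Walk.IsPath.nil
  | a, b, .cons (v := y) h q, hp => by
    rw [Walk.cons_isPath_iff] at hp
    obtain ⟨hq, hay⟩ := hp
    rw [sdWalk]
    split
    · next hx =>
      have hnin : s(u, v) ∉ q.edges := by
        intro hcon
        rw [← hx] at hcon
        exact hay (Walk.fst_mem_support_of_mem_edges q hcon)
      rw [Walk.cons_isPath_iff, Walk.cons_isPath_iff]
      refine ⟨⟨sdWalk_isPath q hq, fun hcon => hnin (none_mem_support_sdWalk q hcon)⟩, ?_⟩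
      rw [Walk.support_cons, List.mem_cons]
      push_neg
      exact ⟨by simp, fun hcon => hay ((mem_support_sdWalk q).mp hcon)⟩
    · next hx =>
      rw [Walk.cons_isPath_iff]
      exact ⟨sdWalk_isPath q hq, fun hcon => hay ((mem_support_sdWalk q).mp hcon)⟩

lemma path_decomp {a b w : V} (hab : G.Adj a b) (p : G.Walk a w) (hp : p.IsPath)
    (he : s(a, b) ∈ p.edges) :
    ∃ q : G.Walk b w, p.edges = s(a, b) :: q.edges ∧ q.IsPath ∧ s(a, b) ∉ q.edges := by
  cases p with
  | nil => simp at he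
  | @cons _ x _ h' q' =>
    rw [Walk.cons_isPath_iff] at hp
    rw [Walk.edges_cons, List.mem_cons] at he
    rcases he with he | he
    · have hbx : b = x := by
        rw [Sym2.eq_iff] at he
        rcases he with ⟨-, rfl⟩ | ⟨rfl, rfl⟩
        · rfl
        · exact absurd hab (by simp [G.irrefl])
      subst hbx
      refine ⟨q', by rw [Walk.edges_cons, he], hp.1, ?_⟩
      have := hp.1  -- q'.IsPath
      intro hcon
      rw [he] at hcon
      exact hp.2 (Walk.fst_mem_support_of_mem_edges q' (he ▸ hcon))
    · exact absurd (Walk.fst_mem_support_of_mem_edges q' he) hp.2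

lemma none_walk {k : ℕ} (c : Sym2 V → ℕ) (huv : G.Adj u v) {a b w : V}
    (hab : (a = u ∧ b = v) ∨ (a = v ∧ b = u))
    (p : G.Walk a w) (hp : p.IsPath) (hcol : k ≤ (p.edges.map c).toFinset.card) :
    ∃ q : (G.subdivideEdge u v).Walk none (some w), q.IsPath ∧
      k ≤ ((q.edges.map (sdColor u v c)).toFinset).card := by
  have hs : s(a, b) = s(u, v) := by
    rcases hab with ⟨rfl, rfl⟩ | ⟨rfl, rfl⟩
    · rfl
    · exact Sym2.eq_swap
  have hadj : G.Adj a b := by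
    rcases hab with ⟨rfl, rfl⟩ | ⟨rfl, rfl⟩
    · exact huv
    · exact huv.symm
  have ha : a = u ∨ a = v := by tauto
  have hb : b = u ∨ b = v := by tauto
  by_cases hmem : s(u, v) ∈ p.edges
  · rw [← hs] at hmem
    obtain ⟨q, hedges, hq, hnq⟩ := path_decomp hadj p hp hmem
    refine ⟨.cons (subdiv_adj_none hb) (sdWalk u v q), ?_, ?_⟩
    · rw [Walk.cons_isPath_iff]
      refine ⟨sdWalk_isPath q hq, fun hcon => ?_⟩
      exact hnq (hs ▸ none_mem_support_sdWalk q hcon)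
    · rw [Walk.edges_cons, List.map_cons, List.toFinset_cons, sdColor_none_left,
        sdWalk_colors]
      have heq : (p.edges.map c).toFinset
          = insert (c s(u, v)) ((q.edges.map c).toFinset) := by
        rw [hedges, List.map_cons, List.toFinset_cons, hs]
      rw [← heq]
      exact hcol
  · refine ⟨.cons (subdiv_adj_none ha) (sdWalk u v p), ?_, ?_⟩
    · rw [Walk.cons_isPath_iff]
      exact ⟨sdWalk_isPath p hp, fun hcon => hmem (none_mem_support_sdWalk p hcon)⟩
    · rw [Walk.edges_cons, List.map_cons, List.toFinset_cons, sdColor_none_left,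
        sdWalk_colors]
      exact hcol.trans (Finset.card_le_card (Finset.subset_insert _ _))

lemma step_key {k : ℕ} (huv : G.Adj u v) (c : Sym2 V → ℕ)
    (hc : G.IsKColorConnecting k c) :
    ∃ c' : Sym2 (Option V) → ℕ, (G.subdivideEdge u v).IsKColorConnecting k c' ∧
      c' '' (G.subdivideEdge u v).edgeSet ⊆ c '' G.edgeSet := by
  have huvne : u ≠ v := huv.ne
  have key_none : ∀ w : V,
      ∃ q : (G.subdivideEdge u v).Walk none (some w), q.IsPath ∧
        k ≤ ((q.edges.map (sdColor u v c)).toFinset).card := by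
    intro w
    by_cases hw : w = u
    · subst hw
      obtain ⟨p, hp, hcol⟩ := hc v w (fun h => huvne h.symm)
      exact none_walk c huv (Or.inr ⟨rfl, rfl⟩) p hp hcol
    · obtain ⟨p, hp, hcol⟩ := hc u w (fun h => hw h.symm)
      exact none_walk c huv (Or.inl ⟨rfl, rfl⟩) p hp hcol
  refine ⟨sdColor u v c, ?_, ?_⟩
  · intro x y hxy
    match x, y with
    | some a, some b =>
      obtain ⟨p, hp, hcol⟩ := hc a b (fun h => hxy (by rw [h]))
      exact ⟨sdWalk u v p, sdWalk_isPath p hp, by rw [sdWalk_colors]; exact hcol⟩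
    | none, some w =>
      exact key_none w
    | some w, none =>
      obtain ⟨q, hq, hcol⟩ := key_none w
      refine ⟨q.reverse, hq.reverse, ?_⟩
      rw [Walk.edges_reverse, List.map_reverse, List.toFinset_reverse]
      exact hcol
    | none, none => exact absurd rfl hxy
  · rintro _ ⟨e, he, rfl⟩
    rw [SimpleGraph.subdivideEdge, SimpleGraph.edgeSet_sup] at he
    rcases he with he | he
    · induction e using Sym2.ind with
      | _ x y =>
        rw [SimpleGraph.mem_edgeSet, SimpleGraph.map_adj] at he
        obtain ⟨a, b, hab, rfl, rfl⟩ := he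
        rw [SimpleGraph.deleteEdges_adj] at hab
        exact ⟨s(a, b), G.mem_edgeSet.mpr hab.1, (sdColor_some c a b).symm ▸ rfl⟩
    · rw [SimpleGraph.edgeSet_fromEdgeSet] at he
      refine ⟨s(u, v), G.mem_edgeSet.mpr huv, ?_⟩
      rcases he.1 with h1 | h1
      · rw [h1]; exact (sdColor_none_left c _).symm
      · rw [Set.mem_singleton_iff] at h1; rw [h1]
        exact (sdColor_none_left c _).symm

end Aux

lemma iso_key {k : ℕ} {V W : Type*} {G : SimpleGraph V} {H : SimpleGraph W} (e : G ≃g H)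
    (c : Sym2 V → ℕ) (hc : G.IsKColorConnecting k c) :
    ∃ c' : Sym2 W → ℕ, H.IsKColorConnecting k c' ∧ c' '' H.edgeSet ⊆ c '' G.edgeSet := by
  refine ⟨fun s => c (s.map e.symm), ?_, ?_⟩
  · intro x y hxy
    obtain ⟨p, hp, hcol⟩ := hc (e.symm x) (e.symm y)
      (fun h => hxy (by simpa using congrArg e h))
    refine ⟨(p.map e.toHom).copy (by simp) (by simp), ?_, ?_⟩
    · rw [Walk.isPath_copy]
      exact Walk.map_isPath_of_injective e.toEquiv.injective hp
    · rw [Walk.edges_copy, Walk.edges_map, List.map_map]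
      have : ((fun s => c (s.map e.symm)) ∘ Sym2.map e.toHom) = c := by
        funext ed
        simp only [Function.comp_apply, Sym2.map_map]
        congr 1
        induction ed using Sym2.ind with
        | _ a b => simp
      rw [this]
      exact hcol
  · rintro _ ⟨s, hs, rfl⟩
    refine ⟨s.map e.symm, ?_, rfl⟩
    exact (SimpleGraph.Iso.map_mem_edgeSet_iff e.symm).mpr hs

lemma key_lemma : ∀ {V W : Type u} {G : SimpleGraph V} {H : SimpleGraph W},
    IsSubdivision G H → ∀ {k : ℕ}, ∀ c : Sym2 V → ℕ, G.IsKColorConnecting k c →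
      ∃ c' : Sym2 W → ℕ, H.IsKColorConnecting k c' ∧ c' '' H.edgeSet ⊆ c '' G.edgeSet := by
  intro V W G H hsub
  induction hsub with
  | of_iso h =>
    intro k c hc
    exact iso_key h.some c hc
  | step u v huv hsub ih =>
    intro k c hc
    obtain ⟨c1, hc1, hs1⟩ := step_key huv c hc
    obtain ⟨c2, hc2, hs2⟩ := ih c1 hc1
    exact ⟨c2, hc2, hs2.trans hs1⟩
theorem stmt_8 {V W : Type u} [Fintype V] (G : SimpleGraph V) (H : SimpleGraph W)
    (k : ℕ) (hk : 2 ≤ k) (hG : G.Connected) (hsub : IsSubdivision G H)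
    (h : G.KColorConnectable k) :
    H.KColorConnectable k ∧ H.ccConn k ≤ G.ccConn k := by
  obtain ⟨c0, hc0⟩ := h
  constructor
  · obtain ⟨c', hc', -⟩ := key_lemma hsub c0 hc0
    exact ⟨c', hc'⟩
  · have hne : {n : ℕ | ∃ c : Sym2 V → ℕ, G.IsKColorConnecting k c ∧
        (c '' G.edgeSet).ncard = n}.Nonempty := ⟨_, c0, hc0, rfl⟩
    obtain ⟨c, hc, hcard⟩ := Nat.sInf_mem hne
    obtain ⟨c', hc', hsub'⟩ := key_lemma hsub c hc
    have hfin : (c '' G.edgeSet).Finite := (Set.toFinite _).image _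
    calc H.ccConn k ≤ (c' '' H.edgeSet).ncard := Nat.sInf_le ⟨c', hc', rfl⟩
      _ ≤ (c '' G.edgeSet).ncard := Set.ncard_le_ncard hsub' hfin
      _ = G.ccConn k := hcard
end

section
/- Let k ≥ 2 and let G = Q_{q_1,q_2,…,q_t} be a generalised θ-graph with q_1 + q_2 ≥ 2k. Then G is k-color connectable and cc_k(G) = k. -/
open SimpleGraph

/-- `G` is a generalised θ-graph with `t` paths, the `i`-th of length `q i`:
`G` is the union of `t` pairwise internally vertex-disjoint paths sharing the same two
end-vertices `x ≠ y`, and `G` has no further vertices or edges. -/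
inductive SimpleGraph.IsGenTheta {V : Type*} (G : SimpleGraph V) (t : ℕ)
    (q : Fin t → ℕ) : Prop
  | mk (x y : V) (hxy : x ≠ y) (p : ∀ _ : Fin t, G.Walk x y)
      (hpath : ∀ i, (p i).IsPath) (hlen : ∀ i, (p i).length = q i)
      (hdisj : ∀ i j, i ≠ j → ∀ w, w ∈ (p i).support → w ∈ (p j).support → w = x ∨ w = y)
      (hverts : ∀ w : V, ∃ i, w ∈ (p i).support)
      (hedges : ∀ e : Sym2 V, e ∈ G.edgeSet ↔ ∃ i, e ∈ (p i).edges) :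
      IsGenTheta G t q


open List

set_option linter.unusedVariables false
set_option linter.unusedSectionVars false

section Infra
variable {V : Type*} {G : SimpleGraph V} [DecidableEq V] {x y u : V}
set_option linter.unusedSectionVars false
set_option linter.unusedVariables false

lemma myEdgesTake (P : G.Walk x y) (h : u ∈ P.support) :
    (P.takeUntil u h).edges = P.edges.take (P.takeUntil u h).length := by
  have hs := congrArg Walk.edges (P.take_spec h)
  rw [Walk.edges_append] at hs
  rw [← hs, List.take_left']
  rw [Walk.length_edges]

lemma myEdgesDrop (P : G.Walk x y) (h : u ∈ P.support) :
    (P.dropUntil u h).edges = P.edges.drop (P.takeUntil u h).length := by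
  have hs := congrArg Walk.edges (P.take_spec h)
  rw [Walk.edges_append] at hs
  rw [← hs, List.drop_left']
  rw [Walk.length_edges]

lemma myLenAdd (P : G.Walk x y) (h : u ∈ P.support) :
    (P.takeUntil u h).length + (P.dropUntil u h).length = P.length := by
  have hs := congrArg Walk.length (P.take_spec h)
  rwa [Walk.length_append] at hs

lemma mySupportTake (P : G.Walk x y) (h : u ∈ P.support) :
    (P.takeUntil u h).support = P.support.take ((P.takeUntil u h).length + 1) := by
  have hs := congrArg Walk.support (P.take_spec h)
  rw [Walk.support_append] at hs
  rw [← hs, List.take_left']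
  rw [Walk.length_support]

lemma mySupportGet (P : G.Walk x y) (h : u ∈ P.support)
    (hl : (P.takeUntil u h).length < P.support.length) :
    P.support[(P.takeUntil u h).length] = u := by
  have h1 : (P.takeUntil u h).support.getLast (by simp [Walk.support_ne_nil]) = u :=
    Walk.getLast_support _
  have h2 : (P.takeUntil u h).support = P.support.take ((P.takeUntil u h).length + 1) :=
    mySupportTake P h
  have h3 : (P.takeUntil u h).support.length = (P.takeUntil u h).length + 1 :=
    Walk.length_support _
  rw [List.getLast_eq_getElem] at h1
  have ha : (P.takeUntil u h).length < (P.takeUntil u h).support.length := by rw [h3]; omega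
  have h1' : (P.takeUntil u h).support[(P.takeUntil u h).length]'ha = u := by
    have hidx : (P.takeUntil u h).support.length - 1 = (P.takeUntil u h).length := by rw [h3]; omega
    simp only [hidx] at h1
    exact h1
  have h4 := (List.getElem_of_eq h2 ha).symm.trans h1'
  simpa using h4

lemma mySupportDrop (P : G.Walk x y) (h : u ∈ P.support) :
    (P.dropUntil u h).support = P.support.drop (P.takeUntil u h).length := by
  have hs := congrArg Walk.support (P.take_spec h)
  rw [Walk.support_append] at hs
  have hlen : (P.takeUntil u h).length + 1 ≤ P.support.length := by
    rw [Walk.length_support]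
    have := myLenAdd P h; omega
  have h2 : P.support.drop (P.takeUntil u h).length
      = P.support[(P.takeUntil u h).length]'(by omega) :: P.support.drop ((P.takeUntil u h).length + 1) :=
    List.drop_eq_getElem_cons (by omega)
  rw [mySupportGet P h (by omega)] at h2
  rw [h2, ← hs]
  rw [List.drop_left' (by rw [Walk.length_support])]
  exact (P.dropUntil u h).support_eq_cons


lemma myPosLt (P : G.Walk x y) (h : u ∈ P.support) (huy : u ≠ y) :
    (P.takeUntil u h).length < P.length := by
  have h1 := myLenAdd P h
  rcases Nat.eq_zero_or_pos (P.dropUntil u h).length with h2 | h2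
  · exact absurd (Walk.eq_of_length_eq_zero h2) huy
  · omega

lemma myPosPos (P : G.Walk x y) (h : u ∈ P.support) (hux : u ≠ x) :
    0 < (P.takeUntil u h).length := by
  rcases Nat.eq_zero_or_pos (P.takeUntil u h).length with h2 | h2
  · exact absurd (Walk.eq_of_length_eq_zero h2).symm hux
  · exact h2

lemma myPosInj {v : V} (P : G.Walk x y) (hP : P.IsPath) (hu : u ∈ P.support)
    (hv : v ∈ P.support)
    (heq : (P.takeUntil u hu).length = (P.takeUntil v hv).length) : u = v := by
  have hlu : (P.takeUntil u hu).length < P.support.length := by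
    rw [Walk.length_support]
    have := myLenAdd P hu; omega
  have h1 := mySupportGet P hu hlu
  have h2 := mySupportGet P hv (heq ▸ hlu)
  rw [← h1, ← h2]
  congr 1

lemma myEqStart (P : G.Walk x y) (h : u ∈ P.support) (hP : P.IsPath)
    (hx : x ∈ (P.dropUntil u h).support) : u = x := by
  rw [mySupportDrop] at hx
  rcases Nat.eq_zero_or_pos (P.takeUntil u h).length with h2 | h2
  · exact (Walk.eq_of_length_eq_zero h2).symm
  · exfalso
    have hcons := P.support_eq_cons
    rw [hcons] at hx
    obtain ⟨m, hm⟩ : ∃ m, (P.takeUntil u h).length = m + 1 := ⟨_, (Nat.succ_pred_eq_of_pos h2).symm⟩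
    rw [hm, List.drop_succ_cons] at hx
    have hx2 : x ∈ P.support.tail := List.drop_subset _ _ hx
    have hnd := hP.support_nodup
    rw [hcons, List.nodup_cons] at hnd
    exact hnd.1 hx2

lemma myEqEnd (P : G.Walk x y) (h : u ∈ P.support) (hP : P.IsPath)
    (hy : y ∈ (P.takeUntil u h).support) : u = y := by
  rw [mySupportTake] at hy
  rw [List.mem_iff_getElem] at hy
  obtain ⟨j, hj, hjy⟩ := hy
  have hjlen : j < P.support.length := Nat.lt_of_lt_of_le hj (by simp)
  rw [List.getElem_take] at hjy
  have hyend : P.support[P.support.length - 1]'(by have := P.length_support; omega) = y := by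
    have h1 : P.support.getLast (by simp [Walk.support_ne_nil]) = y := Walk.getLast_support _
    rwa [List.getLast_eq_getElem] at h1
  have hnd := hP.support_nodup
  have hjeq : j = P.support.length - 1 := by
    have := (List.Nodup.getElem_inj_iff hnd (hi := hjlen)
      (hj := by have := P.length_support; omega)).mp (hjy.trans hyend.symm)
    exact this
  have hlt : j < ((P.takeUntil u h).length + 1) ⊓ P.support.length := by
    simpa using hj
  have hlen2 := myLenAdd P h
  have hls := P.length_support
  have : (P.dropUntil u h).length = 0 := by
    simp only [lt_inf_iff] at hlt
    omega
  exact Walk.eq_of_length_eq_zero this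

lemma myPosOfStart (P : G.Walk x y) (hP : P.IsPath) (h : x ∈ P.support) :
    (P.takeUntil x h).length = 0 := by
  by_contra h0
  have hl : (P.takeUntil x h).length < P.support.length := by
    rw [Walk.length_support]
    have := myLenAdd P h; omega
  have h1 := mySupportGet P h hl
  have h2 : P.support[0]'(by rw [Walk.length_support]; omega) = x := by
    have := List.getElem_of_eq P.support_eq_cons (by rw [Walk.length_support]; omega : 0 < P.support.length)
    simpa using this
  have hnd := hP.support_nodup
  have := (List.Nodup.getElem_inj_iff hnd (hi := hl) (hj := by rw [Walk.length_support]; omega)).mp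
    (h1.trans h2.symm)
  exact h0 this

lemma myPosOfEnd (P : G.Walk x y) (hP : P.IsPath) (h : y ∈ P.support) :
    (P.takeUntil y h).length = P.length := by
  have h1 := myLenAdd P h
  have h2 : (P.dropUntil y h).length = 0 := by
    have h3 := hP.dropUntil h
    rw [Walk.isPath_iff_eq_nil] at h3
    rw [h3]
    rfl
  omega

lemma myPosTake {v : V} (P : G.Walk x y) (hP : P.IsPath) (hv : v ∈ P.support)
    (hu : u ∈ (P.takeUntil v hv).support) :
    ((P.takeUntil v hv).takeUntil u hu).length
      = (P.takeUntil u (Walk.support_takeUntil_subset _ _ hu)).length := by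
  have hT := hP.takeUntil hv
  have ha' : ((P.takeUntil v hv).takeUntil u hu).length < (P.takeUntil v hv).support.length := by
    rw [Walk.length_support]
    have := myLenAdd (P.takeUntil v hv) hu; omega
  have h1 := mySupportGet (P.takeUntil v hv) hu ha'
  have h2 := List.getElem_of_eq (mySupportTake P hv) ha'
  have h3 : P.support[((P.takeUntil v hv).takeUntil u hu).length]'(by
      have := ha'
      rw [mySupportTake P hv, List.length_take] at this
      omega) = u := by
    have h5 := h2.symm.trans h1
    simpa using h5
  have hl2 : (P.takeUntil u (Walk.support_takeUntil_subset _ _ hu)).length < P.support.length := by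
    rw [Walk.length_support]
    have := myLenAdd P (Walk.support_takeUntil_subset _ _ hu); omega
  have h4 := mySupportGet P (Walk.support_takeUntil_subset _ _ hu) hl2
  have hnd := hP.support_nodup
  exact (List.Nodup.getElem_inj_iff hnd (hi := by
      have := ha'
      rw [mySupportTake P hv, List.length_take] at this
      omega) (hj := hl2)).mp (h3.trans h4.symm)

lemma myIsPathAppend {v w : V} {p : G.Walk u v} {q : G.Walk v w} (hp : p.IsPath)
    (hq : q.IsPath) (hshare : ∀ z, z ∈ p.support → z ∈ q.support → z = v) :
    (p.append q).IsPath := by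
  rw [Walk.isPath_def, Walk.support_append]
  have hqc := q.support_eq_cons
  have hqnd := hq.support_nodup
  rw [hqc, List.nodup_cons] at hqnd
  refine List.Nodup.append hp.support_nodup hqnd.2 ?_
  intro z hz1 hz2
  have hz2' : z ∈ q.support := by rw [hqc]; exact List.mem_cons_of_mem _ hz2
  have := hshare z hz1 hz2'
  subst this
  exact hqnd.1 hz2

lemma myEdgeXY (P : G.Walk x y) (hP : P.IsPath) (hxy : x ≠ y)
    (he : s(x, y) ∈ P.edges) : P.length = 1 := by
  cases P with
  | nil => simp at he
  | @cons _ w _ hadj P' =>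
    rw [Walk.edges_cons, List.mem_cons] at he
    rcases he with he | he
    · have hw : w = y := by
        rw [Sym2.eq_iff] at he
        rcases he with ⟨-, h2⟩ | ⟨-, h1⟩
        · exact h2.symm
        · exact absurd h1.symm hxy
      subst hw
      have hP' : P'.IsPath := hP.of_cons
      rw [Walk.isPath_iff_eq_nil] at hP'
      subst hP'
      rfl
    · exfalso
      have hx : x ∈ P'.support := Walk.fst_mem_support_of_mem_edges P' he
      rw [Walk.cons_isPath_iff] at hP
      exact hP.2 hx

end Infra

section Arith

lemma myExistsNear (k b r : ℕ) (hk : 0 < k) (hr : r < k) :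
    ∃ s, b ≤ r + k * s ∧ r + k * s < b + k := by
  have hdm := Nat.div_add_mod b k
  have hm : b % k < k := Nat.mod_lt b hk
  rcases le_or_gt (b % k) r with h | h
  · refine ⟨b / k, ?_, ?_⟩ <;>
    · obtain ⟨X, hX1, hX2⟩ : ∃ X, k * (b / k) + b % k = b ∧ k * (b / k) = X := ⟨_, hdm, rfl⟩
      rw [hX2] at hX1 ⊢
      omega
  · refine ⟨b / k + 1, ?_, ?_⟩ <;>
    · obtain ⟨X, hX1, hX2⟩ : ∃ X, k * (b / k) + b % k = b ∧ k * (b / k) = X := ⟨_, hdm, rfl⟩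
      rw [Nat.mul_add, hX2, Nat.mul_one]
      omega

lemma myRun {k s L r : ℕ} (hk : 0 < k) (hL : k ≤ L) (hr : r < k) :
    ∃ i, s ≤ i ∧ i < s + L ∧ i % k = r := by
  obtain ⟨m, h1, h2⟩ := myExistsNear k s r hk hr
  exact ⟨r + k * m, h1, by omega, by
    rw [Nat.add_mul_mod_self_left, Nat.mod_eq_of_lt hr]⟩

lemma myWrap {k n a b r : ℕ} (hk : 0 < k) (hab : a < b) (hbk : b < a + k)
    (hbn : b ≤ n) (hn : 2 * k ≤ n) (hr : r < k) :
    (∃ i, i < a ∧ i % k = r) ∨ (∃ i, b ≤ i ∧ i < n ∧ i % k = r) := by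
  obtain ⟨m, h1, h2⟩ := myExistsNear k b r hk hr
  rcases lt_or_ge (r + k * m) n with h | h
  · exact Or.inr ⟨r + k * m, h1, h, by
      rw [Nat.add_mul_mod_self_left, Nat.mod_eq_of_lt hr]⟩
  · left
    rcases lt_or_ge r a with hra | hra
    · exact ⟨r, hra, Nat.mod_eq_of_lt hr⟩
    · exfalso
      have hkm1 : k < k * m := by omega
      have hkm2 : k * m < 2 * k := by omega
      rcases lt_or_ge m 2 with hm | hm
      · interval_cases m <;> omega
      · have : k * 2 ≤ k * m := Nat.mul_le_mul_left k hm
        omega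

end Arith

section Lists

lemma myGetMemTake {α : Type*} {l : List α} {a i : ℕ} (h1 : i < a) (hi : i < l.length) :
    l[i] ∈ l.take a := by
  rw [List.getElem_take' hi h1]
  exact List.getElem_mem _

lemma myGetMemDrop {α : Type*} {l : List α} {a i : ℕ} (h1 : a ≤ i) (hi : i < l.length) :
    l[i] ∈ l.drop a := by
  have : l[i] = (l.drop a)[i - a]'(by rw [List.length_drop]; omega) := by
    rw [List.getElem_drop]
    congr 1
    omega
  rw [this]
  exact List.getElem_mem _

lemma myGetMemTakeDrop {α : Type*} {l : List α} {a b i : ℕ} (h1 : a ≤ i) (h2 : i < b)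
    (hi : i < l.length) : l[i] ∈ (l.take b).drop a := by
  have hb : i < (l.take b).length ⊓ l.length := by simp; omega
  have : l[i] = (l.take b)[i]'(by simp at hb ⊢; omega) := List.getElem_take' hi h2
  rw [this]
  exact myGetMemDrop h1 _

lemma myCardCover {α : Type*} [DecidableEq α] (L : List α) (c : α → ℕ) (k : ℕ)
    (h : ∀ r < k, ∃ e ∈ L, c e = r) : k ≤ (L.map c).toFinset.card := by
  have hsub : Finset.range k ⊆ (L.map c).toFinset := by
    intro r hr
    rw [Finset.mem_range] at hr
    obtain ⟨e, he, hce⟩ := h r hr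
    rw [List.mem_toFinset, List.mem_map]
    exact ⟨e, he, hce⟩
  calc k = (Finset.range k).card := (Finset.card_range k).symm
    _ ≤ _ := Finset.card_le_card hsub

end Lists


set_option maxHeartbeats 1000000 in
theorem stmt_15 {V : Type*} (G : SimpleGraph V) (k t : ℕ) (hk : 2 ≤ k) (ht : 2 ≤ t)
    (q : Fin t → ℕ) (hmono : ∀ i j : Fin t, i ≤ j → q j ≤ q i) (hpos : ∀ i, 1 ≤ q i)
    (hpen : 2 ≤ q ⟨t - 2, by omega⟩) (hG : G.IsGenTheta t q)
    (hq : 2 * k ≤ q ⟨0, by omega⟩ + q ⟨1, by omega⟩) :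
    G.KColorConnectable k ∧ G.ccConn k = k := by
  classical
  obtain ⟨x, y, hxy, p, hpath, hlen, hdisj, hverts, hedges⟩ := hG
  obtain ⟨i0, i1, hi01, hq', hmono01⟩ :
      ∃ i0 i1 : Fin t, i0 ≠ i1 ∧ 2 * k ≤ q i0 + q i1 ∧ q i1 ≤ q i0 :=
    ⟨⟨0, by omega⟩, ⟨1, by omega⟩, by simp [Fin.ext_iff], hq,
      hmono _ _ (by simp [Fin.le_def])⟩
  have hq0k : k ≤ (p i0).length := by rw [hlen i0]; omega
  have hq1pos : 1 ≤ (p i1).length := by rw [hlen i1]; exact hpos i1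
  have hn : 2 * k ≤ (p i0).length + (p i1).length := by rw [hlen i0, hlen i1]; omega
  have hE0 : (p i0).edges.length = (p i0).length := Walk.length_edges _
  have hE1 : (p i1).edges.length = (p i1).length := Walk.length_edges _
  have nd0 : (p i0).edges.Nodup := (hpath i0).isTrail.edges_nodup
  have nd1 : (p i1).edges.Nodup := (hpath i1).isTrail.edges_nodup
  have ndS : ∀ i, (p i).support.Nodup := fun i => (hpath i).support_nodup
  -- distinct branches share no edges (when one has length ≥ 2)
  have hedgedisj : ∀ (i j : Fin t), i ≠ j → 2 ≤ (p i).length →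
      ∀ e, e ∈ (p i).edges → e ∈ (p j).edges → False := by
    intro i j hij hlen2 e hei hej
    induction e using Sym2.ind with
    | _ a b =>
      have hadj : G.Adj a b := (p i).adj_of_mem_edges hei
      have hab : a ≠ b := hadj.ne
      have hai : a ∈ (p i).support := Walk.fst_mem_support_of_mem_edges _ hei
      have haj : a ∈ (p j).support := Walk.fst_mem_support_of_mem_edges _ hej
      have hbi : b ∈ (p i).support := Walk.snd_mem_support_of_mem_edges _ hei
      have hbj : b ∈ (p j).support := Walk.snd_mem_support_of_mem_edges _ hej
      have hxy1 : s(x, y) ∈ (p i).edges := by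
        rcases hdisj i j hij a hai haj with rfl | rfl <;>
          rcases hdisj i j hij b hbi hbj with rfl | rfl
        · exact absurd rfl hab
        · exact hei
        · rwa [Sym2.eq_swap] at hei
        · exact absurd rfl hab
      have := myEdgeXY (p i) (hpath i) hxy hxy1
      omega
  -- the coloring
  set c : Sym2 V → ℕ := fun e =>
    if e ∈ (p i0).edges then (p i0).edges.idxOf e % k
    else if e ∈ (p i1).edges then
      ((p i0).length + (p i1).length - 1 - (p i1).edges.idxOf e) % k
    else 0 with hcdef
  have hclt : ∀ e, c e < k := by
    intro e
    simp only [hcdef]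
    split_ifs <;> first | exact Nat.mod_lt _ (by omega) | omega
  have hc0 : ∀ (i : ℕ) (h : i < (p i0).edges.length), c ((p i0).edges[i]'h) = i % k := by
    intro i h
    simp only [hcdef]
    rw [if_pos (List.getElem_mem _), nd0.idxOf_getElem]
  have hc1 : ∀ (j : ℕ) (h : j < (p i1).edges.length),
      c ((p i1).edges[j]'h) = ((p i0).length + (p i1).length - 1 - j) % k := by
    intro j h
    simp only [hcdef]
    rw [if_neg, if_pos (List.getElem_mem _), nd1.idxOf_getElem]
    intro hmem
    exact hedgedisj i0 i1 hi01 (by omega) _ hmem (List.getElem_mem _)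
  -- coverage from all of E0
  have covFull : ∀ (L : List (Sym2 V)), (∀ e ∈ (p i0).edges, e ∈ L) →
      ∀ r < k, ∃ e ∈ L, c e = r := by
    intro L hL r hr
    obtain ⟨i, -, hi2, hi3⟩ := myRun (k := k) (s := 0) (L := (p i0).length)
      (by omega) hq0k hr
    have hiq : i < (p i0).edges.length := by rw [hE0]; omega
    exact ⟨(p i0).edges[i]'hiq, hL _ (List.getElem_mem _), by rw [hc0 i hiq, hi3]⟩
  -- the main connectivity claim
  have key : ∀ u v : V, u ≠ v →
      ∃ P : G.Walk u v, P.IsPath ∧ ∀ r < k, ∃ e ∈ P.edges, c e = r := by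
    have symmG : ∀ u v : V,
        (∃ P : G.Walk u v, P.IsPath ∧ ∀ r < k, ∃ e ∈ P.edges, c e = r) →
        ∃ P : G.Walk v u, P.IsPath ∧ ∀ r < k, ∃ e ∈ P.edges, c e = r := by
      rintro u v ⟨P, h1, h2⟩
      refine ⟨P.reverse, h1.reverse, fun r hr => ?_⟩
      obtain ⟨e, he, hce⟩ := h2 r hr
      exact ⟨e, by rw [Walk.edges_reverse, List.mem_reverse]; exact he, hce⟩
    -- both on branch 0
    have caseLL : ∀ u v (hu : u ∈ (p i0).support) (hv : v ∈ (p i0).support),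
        ((p i0).takeUntil u hu).length < ((p i0).takeUntil v hv).length →
        ∃ P : G.Walk u v, P.IsPath ∧ ∀ r < k, ∃ e ∈ P.edges, c e = r := by
      intro u v hu hv hlt
      have hbq : ((p i0).takeUntil v hv).length ≤ (p i0).length :=
        Walk.length_takeUntil_le _ _
      by_cases hcase : k ≤ ((p i0).takeUntil v hv).length - ((p i0).takeUntil u hu).length
      · -- middle segment of branch 0
        have hl : ((p i0).takeUntil u hu).length < (p i0).support.length := by
          rw [Walk.length_support]; omega
        have hvT : u ∈ ((p i0).takeUntil v hv).support := by
          rw [mySupportTake]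
          rw [← mySupportGet (p i0) hu hl]
          exact myGetMemTake (by omega) hl
        refine ⟨((p i0).takeUntil v hv).dropUntil u hvT,
          ((hpath i0).takeUntil hv).dropUntil hvT, ?_⟩
        intro r hr
        obtain ⟨ii, hia, hib, hick⟩ := myRun (k := k) (s := ((p i0).takeUntil u hu).length)
          (L := ((p i0).takeUntil v hv).length - ((p i0).takeUntil u hu).length)
          (by omega) hcase hr
        have hiq : ii < (p i0).edges.length := by rw [hE0]; omega
        refine ⟨(p i0).edges[ii]'hiq, ?_, by rw [hc0 ii hiq, hick]⟩
        have hposeq : (((p i0).takeUntil v hv).takeUntil u hvT).length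
            = ((p i0).takeUntil u hu).length := myPosTake (p i0) (hpath i0) hv hvT
        rw [myEdgesDrop _ hvT, myEdgesTake _ hv, hposeq]
        exact myGetMemTakeDrop hia (by omega) hiq
      · -- around through branch 1
        have hvx : v ≠ x := by
          intro he; subst he
          have h0 := myPosOfStart (p i0) (hpath i0) hv
          omega
        have huy : u ≠ y := by
          intro he; subst he
          have h0 := myPosOfEnd (p i0) (hpath i0) hu
          omega
        have hinner : ((p i1).append (((p i0).dropUntil v hv).reverse)).IsPath := by
          apply myIsPathAppend (hpath i1) ((hpath i0).dropUntil hv).reverse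
          intro z h1 h2
          rw [Walk.support_reverse, List.mem_reverse] at h2
          rcases hdisj i1 i0 hi01.symm z h1 (Walk.support_dropUntil_subset _ _ h2) with rfl | rfl
          · exact absurd (myEqStart (p i0) hv (hpath i0) h2) hvx
          · rfl
        refine ⟨((p i0).takeUntil u hu).reverse.append
          ((p i1).append (((p i0).dropUntil v hv).reverse)), ?_, ?_⟩
        · apply myIsPathAppend ((hpath i0).takeUntil hu).reverse hinner
          intro z h1 h2
          rw [Walk.support_reverse, List.mem_reverse] at h1
          rw [Walk.mem_support_append_iff] at h2
          rcases h2 with h2 | h2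
          · rcases hdisj i0 i1 hi01 z (Walk.support_takeUntil_subset _ _ h1) h2 with rfl | rfl
            · rfl
            · exact absurd (myEqEnd (p i0) hu (hpath i0) h1) huy
          · rw [Walk.support_reverse, List.mem_reverse] at h2
            rw [mySupportTake] at h1
            rw [mySupportDrop] at h2
            exact ((List.disjoint_take_drop (ndS i0) (by omega)) h1 h2).elim
        · intro r hr
          have hmem : ∀ e : Sym2 V,
              e ∈ (p i0).edges.take ((p i0).takeUntil u hu).length ∨ e ∈ (p i1).edges ∨
                e ∈ (p i0).edges.drop ((p i0).takeUntil v hv).length →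
              e ∈ (((p i0).takeUntil u hu).reverse.append
                ((p i1).append (((p i0).dropUntil v hv).reverse))).edges := by
            intro e he
            simp only [Walk.edges_append, Walk.edges_reverse, List.mem_append,
              List.mem_reverse, myEdgesTake, myEdgesDrop]
            tauto
          rcases myWrap (k := k) (n := (p i0).length + (p i1).length)
              (a := ((p i0).takeUntil u hu).length) (b := ((p i0).takeUntil v hv).length)
              (by omega) hlt (by omega) (by omega) hn hr with ⟨i, hia, hick⟩ | ⟨i, hib, hin, hick⟩
          · have hiq : i < (p i0).edges.length := by rw [hE0]; omega
            exact ⟨(p i0).edges[i]'hiq, hmem _ (Or.inl (myGetMemTake hia hiq)),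
              by rw [hc0 i hiq, hick]⟩
          · rcases lt_or_ge i ((p i0).length) with hcase2 | hcase2
            · have hiq : i < (p i0).edges.length := by rw [hE0]; omega
              exact ⟨(p i0).edges[i]'hiq, hmem _ (Or.inr (Or.inr (myGetMemDrop hib hiq))),
                by rw [hc0 i hiq, hick]⟩
            · have hjq : (p i0).length + (p i1).length - 1 - i < (p i1).edges.length := by
                rw [hE1]; omega
              refine ⟨(p i1).edges[(p i0).length + (p i1).length - 1 - i]'hjq,
                hmem _ (Or.inr (Or.inl (List.getElem_mem _))), ?_⟩
              rw [hc1 _ hjq]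
              have heq : (p i0).length + (p i1).length - 1 -
                  ((p i0).length + (p i1).length - 1 - i) = i := by omega
              rw [heq, hick]
    -- u on branch 0, v internal on branch 1
    have caseLR1 : ∀ u v (hu : u ∈ (p i0).support) (hv : v ∈ (p i1).support),
        v ≠ x → v ≠ y →
        ∃ P : G.Walk u v, P.IsPath ∧ ∀ r < k, ∃ e ∈ P.edges, c e = r := by
      intro u v hu hv hvx hvy
      have hb1 : 0 < ((p i1).takeUntil v hv).length := myPosPos (p i1) hv hvx
      have hb2 : ((p i1).takeUntil v hv).length < (p i1).length := myPosLt (p i1) hv hvy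
      have haq : ((p i0).takeUntil u hu).length ≤ (p i0).length :=
        Walk.length_takeUntil_le _ _
      by_cases hcase : k ≤ (p i0).length + (p i1).length
          - ((p i1).takeUntil v hv).length - ((p i0).takeUntil u hu).length
      · -- via y with long run
        refine ⟨((p i0).dropUntil u hu).append (((p i1).dropUntil v hv).reverse), ?_, ?_⟩
        · apply myIsPathAppend ((hpath i0).dropUntil hu) ((hpath i1).dropUntil hv).reverse
          intro z h1 h2
          rw [Walk.support_reverse, List.mem_reverse] at h2
          rcases hdisj i0 i1 hi01 z (Walk.support_dropUntil_subset _ _ h1)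
            (Walk.support_dropUntil_subset _ _ h2) with rfl | rfl
          · exact absurd (myEqStart (p i1) hv (hpath i1) h2) hvx
          · rfl
        · intro r hr
          have hmem : ∀ e : Sym2 V,
              e ∈ (p i0).edges.drop ((p i0).takeUntil u hu).length ∨
                e ∈ (p i1).edges.drop ((p i1).takeUntil v hv).length →
              e ∈ (((p i0).dropUntil u hu).append
                (((p i1).dropUntil v hv).reverse)).edges := by
            intro e he
            simp only [Walk.edges_append, Walk.edges_reverse, List.mem_append,
              List.mem_reverse, myEdgesDrop]
            tauto
          obtain ⟨i, hia, hib, hick⟩ := myRun (k := k) (s := ((p i0).takeUntil u hu).length)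
            (L := (p i0).length + (p i1).length
              - ((p i1).takeUntil v hv).length - ((p i0).takeUntil u hu).length)
            (by omega) hcase hr
          rcases lt_or_ge i ((p i0).length) with hcase2 | hcase2
          · have hiq : i < (p i0).edges.length := by rw [hE0]; omega
            exact ⟨(p i0).edges[i]'hiq, hmem _ (Or.inl (myGetMemDrop hia hiq)),
              by rw [hc0 i hiq, hick]⟩
          · have hjq : (p i0).length + (p i1).length - 1 - i < (p i1).edges.length := by
              rw [hE1]; omega
            refine ⟨(p i1).edges[(p i0).length + (p i1).length - 1 - i]'hjq,
              hmem _ (Or.inr (myGetMemDrop (by omega) hjq)), ?_⟩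
            rw [hc1 _ hjq]
            have heq : (p i0).length + (p i1).length - 1 -
                ((p i0).length + (p i1).length - 1 - i) = i := by omega
            rw [heq, hick]
      · -- via x, wrap colors
        refine ⟨((p i0).takeUntil u hu).reverse.append ((p i1).takeUntil v hv), ?_, ?_⟩
        · apply myIsPathAppend ((hpath i0).takeUntil hu).reverse ((hpath i1).takeUntil hv)
          intro z h1 h2
          rw [Walk.support_reverse, List.mem_reverse] at h1
          rcases hdisj i0 i1 hi01 z (Walk.support_takeUntil_subset _ _ h1)
            (Walk.support_takeUntil_subset _ _ h2) with rfl | rfl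
          · rfl
          · exact absurd (myEqEnd (p i1) hv (hpath i1) h2) hvy
        · intro r hr
          have hmem : ∀ e : Sym2 V,
              e ∈ (p i0).edges.take ((p i0).takeUntil u hu).length ∨
                e ∈ (p i1).edges.take ((p i1).takeUntil v hv).length →
              e ∈ (((p i0).takeUntil u hu).reverse.append ((p i1).takeUntil v hv)).edges := by
            intro e he
            simp only [Walk.edges_append, Walk.edges_reverse, List.mem_append,
              List.mem_reverse, myEdgesTake]
            tauto
          rcases myWrap (k := k) (n := (p i0).length + (p i1).length)
              (a := ((p i0).takeUntil u hu).length)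
              (b := (p i0).length + (p i1).length - ((p i1).takeUntil v hv).length)
              (by omega) (by omega) (by omega) (by omega) hn hr
            with ⟨i, hia, hick⟩ | ⟨i, hib, hin, hick⟩
          · have hiq : i < (p i0).edges.length := by rw [hE0]; omega
            exact ⟨(p i0).edges[i]'hiq, hmem _ (Or.inl (myGetMemTake hia hiq)),
              by rw [hc0 i hiq, hick]⟩
          · have hjq : (p i0).length + (p i1).length - 1 - i < (p i1).edges.length := by
              rw [hE1]; omega
            refine ⟨(p i1).edges[(p i0).length + (p i1).length - 1 - i]'hjq,
              hmem _ (Or.inr (myGetMemTake (by omega) hjq)), ?_⟩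
            rw [hc1 _ hjq]
            have heq : (p i0).length + (p i1).length - 1 -
                ((p i0).length + (p i1).length - 1 - i) = i := by omega
            rw [heq, hick]
    -- u on branch 0, v internal on branch j ∉ {0,1}
    have caseLRj : ∀ u v (hu : u ∈ (p i0).support) (j : Fin t), j ≠ i0 → j ≠ i1 →
        ∀ (hv : v ∈ (p j).support), v ≠ x → v ≠ y →
        ∃ P : G.Walk u v, P.IsPath ∧ ∀ r < k, ∃ e ∈ P.edges, c e = r := by
      intro u v hu j hj0 hj1 hv hvx hvy
      have haq : ((p i0).takeUntil u hu).length ≤ (p i0).length :=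
        Walk.length_takeUntil_le _ _
      by_cases hA : k ≤ ((p i0).takeUntil u hu).length
      · -- prefix of branch 0 already has all colors
        refine ⟨((p i0).takeUntil u hu).reverse.append ((p j).takeUntil v hv), ?_, ?_⟩
        · apply myIsPathAppend ((hpath i0).takeUntil hu).reverse ((hpath j).takeUntil hv)
          intro z h1 h2
          rw [Walk.support_reverse, List.mem_reverse] at h1
          rcases hdisj i0 j (Ne.symm hj0) z (Walk.support_takeUntil_subset _ _ h1)
            (Walk.support_takeUntil_subset _ _ h2) with rfl | rfl
          · rfl
          · exact absurd (myEqEnd (p j) hv (hpath j) h2) hvy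
        · intro r hr
          obtain ⟨i, -, hib, hick⟩ := myRun (k := k) (s := 0)
            (L := ((p i0).takeUntil u hu).length) (by omega) hA hr
          have hiq : i < (p i0).edges.length := by rw [hE0]; omega
          refine ⟨(p i0).edges[i]'hiq, ?_, by rw [hc0 i hiq, hick]⟩
          simp only [Walk.edges_append, Walk.edges_reverse, List.mem_append,
            List.mem_reverse, myEdgesTake]
          have := myGetMemTake (by omega : i < ((p i0).takeUntil u hu).length) hiq
          tauto
      · by_cases hA0 : ((p i0).takeUntil u hu).length = 0
        · -- u = x : use all of branch 0 then down branch j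
          have hxu : x = u := Walk.eq_of_length_eq_zero hA0
          subst hxu
          refine ⟨(p i0).append (((p j).dropUntil v hv).reverse), ?_, ?_⟩
          · apply myIsPathAppend (hpath i0) ((hpath j).dropUntil hv).reverse
            intro z h1 h2
            rw [Walk.support_reverse, List.mem_reverse] at h2
            rcases hdisj i0 j (Ne.symm hj0) z h1 (Walk.support_dropUntil_subset _ _ h2)
              with rfl | rfl
            · exact absurd (myEqStart (p j) hv (hpath j) h2) hvx
            · rfl
          · refine covFull _ (fun e he => ?_)
            simp only [Walk.edges_append, Walk.edges_reverse, List.mem_append,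
              List.mem_reverse]
            tauto
        · -- 0 < pos u < k : go u → y → x → v
          have hux : u ≠ x := by
            intro he
            apply hA0
            subst he
            exact myPosOfStart _ (hpath i0) hu
          have hinner : ((p i1).reverse.append ((p j).takeUntil v hv)).IsPath := by
            apply myIsPathAppend (hpath i1).reverse ((hpath j).takeUntil hv)
            intro z h1 h2
            rw [Walk.support_reverse, List.mem_reverse] at h1
            rcases hdisj i1 j (Ne.symm hj1) z h1 (Walk.support_takeUntil_subset _ _ h2)
              with rfl | rfl
            · rfl
            · exact absurd (myEqEnd (p j) hv (hpath j) h2) hvy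
          refine ⟨((p i0).dropUntil u hu).append
            ((p i1).reverse.append ((p j).takeUntil v hv)), ?_, ?_⟩
          · apply myIsPathAppend ((hpath i0).dropUntil hu) hinner
            intro z h1 h2
            rw [Walk.mem_support_append_iff] at h2
            rcases h2 with h2 | h2
            · rw [Walk.support_reverse, List.mem_reverse] at h2
              rcases hdisj i0 i1 hi01 z (Walk.support_dropUntil_subset _ _ h1) h2
                with rfl | rfl
              · exact absurd (myEqStart (p i0) hu (hpath i0) h1) hux
              · rfl
            · rcases hdisj i0 j (Ne.symm hj0) z (Walk.support_dropUntil_subset _ _ h1)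
                (Walk.support_takeUntil_subset _ _ h2) with rfl | rfl
              · exact absurd (myEqStart (p i0) hu (hpath i0) h1) hux
              · exact absurd (myEqEnd (p j) hv (hpath j) h2) hvy
          · intro r hr
            have hmem : ∀ e : Sym2 V,
                e ∈ (p i0).edges.drop ((p i0).takeUntil u hu).length ∨ e ∈ (p i1).edges →
                e ∈ (((p i0).dropUntil u hu).append
                  ((p i1).reverse.append ((p j).takeUntil v hv))).edges := by
              intro e he
              simp only [Walk.edges_append, Walk.edges_reverse, List.mem_append,
                List.mem_reverse, myEdgesDrop]
              tauto
            obtain ⟨i, hia, hib, hick⟩ := myRun (k := k)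
              (s := ((p i0).takeUntil u hu).length)
              (L := (p i0).length + (p i1).length - ((p i0).takeUntil u hu).length)
              (by omega) (by omega) hr
            rcases lt_or_ge i ((p i0).length) with hcase2 | hcase2
            · have hiq : i < (p i0).edges.length := by rw [hE0]; omega
              exact ⟨(p i0).edges[i]'hiq, hmem _ (Or.inl (myGetMemDrop hia hiq)),
                by rw [hc0 i hiq, hick]⟩
            · have hjq : (p i0).length + (p i1).length - 1 - i < (p i1).edges.length := by
                rw [hE1]; omega
              refine ⟨(p i1).edges[(p i0).length + (p i1).length - 1 - i]'hjq,
                hmem _ (Or.inr (List.getElem_mem _)), ?_⟩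
              rw [hc1 _ hjq]
              have heq : (p i0).length + (p i1).length - 1 -
                  ((p i0).length + (p i1).length - 1 - i) = i := by omega
              rw [heq, hick]
    -- both internal on branches ≠ 0
    have caseRR : ∀ u v (i j : Fin t), i ≠ i0 → j ≠ i0 →
        ∀ (hu : u ∈ (p i).support) (hv : v ∈ (p j).support),
        u ≠ x → u ≠ y → v ≠ x → v ≠ y →
        (i ≠ j ∨ (i = j ∧ ((p i).takeUntil u hu).length < ((p j).takeUntil v hv).length)) →
        ∃ P : G.Walk u v, P.IsPath ∧ ∀ r < k, ∃ e ∈ P.edges, c e = r := by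
      intro u v i j hii0 hjj0 hu hv hux huy hvx hvy hor
      have hinner : ((p i0).append (((p j).dropUntil v hv).reverse)).IsPath := by
        apply myIsPathAppend (hpath i0) ((hpath j).dropUntil hv).reverse
        intro z h1 h2
        rw [Walk.support_reverse, List.mem_reverse] at h2
        rcases hdisj i0 j (Ne.symm hjj0) z h1 (Walk.support_dropUntil_subset _ _ h2)
          with rfl | rfl
        · exact absurd (myEqStart (p j) hv (hpath j) h2) hvx
        · rfl
      refine ⟨((p i).takeUntil u hu).reverse.append
        ((p i0).append (((p j).dropUntil v hv).reverse)), ?_, ?_⟩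
      · apply myIsPathAppend ((hpath i).takeUntil hu).reverse hinner
        intro z h1 h2
        rw [Walk.support_reverse, List.mem_reverse] at h1
        rw [Walk.mem_support_append_iff] at h2
        rcases h2 with h2 | h2
        · rcases hdisj i i0 hii0 z (Walk.support_takeUntil_subset _ _ h1) h2 with rfl | rfl
          · rfl
          · exact absurd (myEqEnd (p i) hu (hpath i) h1) huy
        · rw [Walk.support_reverse, List.mem_reverse] at h2
          rcases hor with hij | ⟨rfl, hlt⟩
          · rcases hdisj i j hij z (Walk.support_takeUntil_subset _ _ h1)
              (Walk.support_dropUntil_subset _ _ h2) with rfl | rfl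
            · exact absurd (myEqStart (p j) hv (hpath j) h2) hvx
            · exact absurd (myEqEnd (p i) hu (hpath i) h1) huy
          · rw [mySupportTake] at h1
            rw [mySupportDrop] at h2
            exact ((List.disjoint_take_drop (ndS i) (by omega)) h1 h2).elim
      · refine covFull _ (fun e he => ?_)
        simp only [Walk.edges_append, Walk.edges_reverse, List.mem_append, List.mem_reverse]
        tauto
    -- classification
    have classify : ∀ w : V, w ∈ (p i0).support ∨
        ∃ i, i ≠ i0 ∧ ∃ _ : w ∈ (p i).support, w ≠ x ∧ w ≠ y := by
      intro w
      obtain ⟨i, hi⟩ := hverts w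
      by_cases hwx : w = x
      · exact Or.inl (by rw [hwx]; exact Walk.start_mem_support _)
      by_cases hwy : w = y
      · exact Or.inl (by rw [hwy]; exact Walk.end_mem_support _)
      by_cases hii : i = i0
      · exact Or.inl (by rw [← hii]; exact hi)
      · exact Or.inr ⟨i, hii, hi, hwx, hwy⟩
    intro u v huv
    rcases classify u with hu | ⟨i, hii, hu, hux, huy⟩
    · rcases classify v with hv | ⟨j, hjj, hv, hvx, hvy⟩
      · rcases lt_trichotomy ((p i0).takeUntil u hu).length ((p i0).takeUntil v hv).length
          with hlt | heq | hgt
        · exact caseLL u v hu hv hlt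
        · exact absurd (myPosInj (p i0) (hpath i0) hu hv heq) huv
        · exact symmG v u (caseLL v u hv hu hgt)
      · by_cases hj1 : j = i1
        · subst hj1; exact caseLR1 u v hu hv hvx hvy
        · exact caseLRj u v hu j hjj hj1 hv hvx hvy
    · rcases classify v with hv | ⟨j, hjj, hv, hvx, hvy⟩
      · by_cases hi1 : i = i1
        · subst hi1; exact symmG v u (caseLR1 v u hv hu hux huy)
        · exact symmG v u (caseLRj v u hv i hii hi1 hu hux huy)
      · by_cases hij : i = j
        · subst hij
          rcases lt_trichotomy ((p i).takeUntil u hu).length ((p i).takeUntil v hv).length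
            with hlt | heq | hgt
          · exact caseRR u v i i hii hii hu hv hux huy hvx hvy (Or.inr ⟨rfl, hlt⟩)
          · exact absurd (myPosInj (p i) (hpath i) hu hv heq) huv
          · exact symmG v u (caseRR v u i i hii hii hv hu hvx hvy hux huy (Or.inr ⟨rfl, hgt⟩))
        · exact caseRR u v i j hii hjj hu hv hux huy hvx hvy (Or.inl hij)
  -- assemble
  have hconn : G.IsKColorConnecting k c := by
    intro u v huv
    obtain ⟨P, hP, hcov⟩ := key u v huv
    exact ⟨P, hP, myCardCover _ _ _ hcov⟩
  have himg : c '' G.edgeSet = Set.Iio k := by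
    ext z
    constructor
    · rintro ⟨e, -, rfl⟩
      exact hclt e
    · intro hz
      have hzk : z < k := hz
      have hzE : z < (p i0).edges.length := by rw [hE0]; omega
      refine ⟨(p i0).edges[z]'hzE, (hedges _).mpr ⟨i0, List.getElem_mem _⟩, ?_⟩
      rw [hc0 z hzE]
      exact Nat.mod_eq_of_lt hzk
  have hfinV : Finite V := by
    rw [← Set.finite_univ_iff]
    refine Set.Finite.subset (Set.finite_iUnion (fun i : Fin t => (p i).support.finite_toSet))
      fun w _ => ?_
    obtain ⟨i, hi⟩ := hverts w
    exact Set.mem_iUnion.mpr ⟨i, hi⟩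
  have hcard : (c '' G.edgeSet).ncard = k := by
    rw [himg]
    have : (Set.Iio k) = ↑(Finset.range k) := by
      ext m; simp [Set.mem_Iio]
    rw [this, Set.ncard_coe_finset, Finset.card_range]
  refine ⟨⟨c, hconn⟩, ?_⟩
  apply _root_.le_antisymm
  · exact Nat.sInf_le ⟨c, hconn, hcard⟩
  · apply le_csInf
    · exact ⟨k, c, hconn, hcard⟩
    rintro m ⟨c', hc', hm⟩
    obtain ⟨P, hP, hcard'⟩ := hc' x y hxy
    have hsub : ↑((P.edges.map c').toFinset) ⊆ c' '' G.edgeSet := by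
      intro z hz
      rw [Finset.mem_coe, List.mem_toFinset, List.mem_map] at hz
      obtain ⟨e, he, rfl⟩ := hz
      exact ⟨e, P.edges_subset_edgeSet he, rfl⟩
    have hfin : (c' '' G.edgeSet).Finite := (Set.toFinite G.edgeSet).image c'
    calc k ≤ (P.edges.map c').toFinset.card := hcard'
      _ = (↑((P.edges.map c').toFinset) : Set ℕ).ncard := (Set.ncard_coe_finset _).symm
      _ ≤ (c' '' G.edgeSet).ncard := Set.ncard_le_ncard hsub hfin
      _ = m := hm
end

section
/- For each integer n ≥ 4, the rainbow connection number of the cycle C_n equals ⌈n/2⌉. -/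
open SimpleGraph

/-- `c` is a rainbow connecting edge-coloring of `G`: between every pair of distinct
vertices there is a path no two of whose edges have the same color. -/
def SimpleGraph.IsRainbowConnecting {V : Type*} (G : SimpleGraph V)
    (c : Sym2 V → ℕ) : Prop :=
  ∀ u v : V, u ≠ v → ∃ p : G.Walk u v, p.IsPath ∧ (p.edges.map c).Nodup

/-- The rainbow connection number `rc(G)`: the minimum number of colors used on the edges
of `G` by a rainbow connecting coloring. -/
noncomputable def SimpleGraph.rcNumber {V : Type*} (G : SimpleGraph V) : ℕ :=
  sInf {n : ℕ | ∃ c : Sym2 V → ℕ, G.IsRainbowConnecting c ∧ (c '' G.edgeSet).ncard = n}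

open Fin.CommRing

section Cyc
variable {n : ℕ} [NeZero n]

lemma val_one_of (hn : 2 ≤ n) : (1 : Fin n).val = 1 := by
  rw [Fin.val_one']
  exact Nat.mod_eq_of_lt (by omega)

lemma adj_succ (hn : 2 ≤ n) (u : Fin n) : (cycleGraph n).Adj u (u + 1) := by
  rw [cycleGraph_adj']
  right
  simp only [add_sub_cancel_left]
  exact val_one_of hn

lemma adj_cases (hn : 2 ≤ n) {u w : Fin n} (h : (cycleGraph n).Adj u w) :
    w = u + 1 ∨ w = u - 1 := by
  rw [cycleGraph_adj'] at h
  have h1 : (1 : Fin n).val = 1 := val_one_of hn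
  rcases h with h | h
  · right
    have : u - w = 1 := Fin.ext (by rw [h1]; exact h)
    rw [← this]; ring
  · left
    have : w - u = 1 := Fin.ext (by rw [h1]; exact h)
    rw [← this]; ring

def arcWalk (hn : 2 ≤ n) (u : Fin n) : (m : ℕ) → (cycleGraph n).Walk u (u + (m : Fin n))
  | 0 => Walk.nil.copy rfl (by simp)
  | m + 1 => (Walk.cons (adj_succ hn u) (arcWalk hn (u + 1) m)).copy rfl
      (by push_cast; ring)

lemma arcWalk_edges (hn : 2 ≤ n) (u : Fin n) (m : ℕ) :
    (arcWalk hn u m).edges =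
      (List.range m).map (fun (i : ℕ) => s(u + (i : Fin n), u + (i : Fin n) + 1)) := by
  induction m generalizing u with
  | zero => simp [arcWalk]
  | succ m ih =>
      rw [arcWalk, Walk.edges_copy, Walk.edges_cons, ih, List.range_succ_eq_map,
        List.map_cons, List.map_map]
      congr 1
      · push_cast; ring_nf
      · apply List.map_congr_left
        intro i _
        simp only [Function.comp_apply, Nat.succ_eq_add_one]
        congr 1 <;> push_cast <;> ring

lemma arcWalk_support (hn : 2 ≤ n) (u : Fin n) (m : ℕ) :
    (arcWalk hn u m).support = (List.range (m + 1)).map (fun (i : ℕ) => u + (i : Fin n)) := by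
  induction m generalizing u with
  | zero => simp [arcWalk, List.range_succ]
  | succ m ih =>
      rw [arcWalk, Walk.support_copy, Walk.support_cons, ih, List.range_succ_eq_map (n := m+1),
        List.map_cons, List.map_map]
      congr 1
      · push_cast; ring_nf
      · apply List.map_congr_left
        intro i _
        simp only [Function.comp_apply, Nat.succ_eq_add_one]
        push_cast; ring

lemma arcWalk_length (hn : 2 ≤ n) (u : Fin n) (m : ℕ) :
    (arcWalk hn u m).length = m := by
  induction m generalizing u with
  | zero => simp [arcWalk]
  | succ m ih => rw [arcWalk, Walk.length_copy, Walk.length_cons, ih]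


lemma walk_steps (hn : 2 ≤ n) {u v : Fin n} (p : (cycleGraph n).Walk u v) :
    ∃ a b : ℕ, a + b = p.length ∧ v = u + (a : Fin n) - (b : Fin n) := by
  induction p with
  | nil => exact ⟨0, 0, rfl, by simp⟩
  | cons h q ih =>
      obtain ⟨a, b, hab, hv⟩ := ih
      rcases adj_cases hn h with hw | hw
      · exact ⟨a + 1, b, by rw [Walk.length_cons]; omega,
          by rw [hv, hw]; push_cast; ring⟩
      · exact ⟨a, b + 1, by rw [Walk.length_cons]; omega,
          by rw [hv, hw]; push_cast; ring⟩

lemma sub_val_mod (u v : Fin n) : (v.val + n - u.val) % n = (v - u).val := by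
  rcases u with ⟨a, ha⟩; rcases v with ⟨b, hb⟩
  rw [Fin.sub_def]
  simp only []
  congr 1
  omega

lemma mod_small (t : ℕ) (hn : 0 < n) (h : t < 2 * n) :
    (t % n = t ∧ t < n) ∨ (t % n = t - n ∧ n ≤ t) := by
  rcases Nat.lt_or_ge t n with h1 | h1
  · exact Or.inl ⟨Nat.mod_eq_of_lt h1, h1⟩
  · refine Or.inr ⟨?_, h1⟩
    rw [Nat.mod_eq_sub_mod h1, Nat.mod_eq_of_lt (by omega)]

lemma minlen (hn : 2 ≤ n) {u v : Fin n} (p : (cycleGraph n).Walk u v) :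
    min (v - u).val (n - (v - u).val) ≤ p.length := by
  obtain ⟨a, b, hab, hv⟩ := walk_steps hn p
  have hdlt : (v - u).val < n := (v - u).isLt
  by_cases hL : n ≤ p.length
  · omega
  have ha : a < n := by omega
  have hb : b < n := by omega
  have hd : (v.val + n - u.val) % n = (v - u).val := sub_val_mod u v
  have key2 : (v.val + b) % n = (u.val + a) % n := by
    have h2 : v + (b : Fin n) = u + (a : Fin n) := by rw [hv]; ring
    have h3 := congrArg Fin.val h2
    rw [Fin.add_def, Fin.add_def, Fin.val_natCast, Fin.val_natCast,
      Nat.mod_eq_of_lt ha, Nat.mod_eq_of_lt hb] at h3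
    exact h3
  have hu : u.val < n := u.isLt
  have hvv : v.val < n := v.isLt
  have m1 := mod_small (n := n) (v.val + n - u.val) (by omega) (by omega)
  have m2 := mod_small (n := n) (v.val + b) (by omega) (by omega)
  have m3 := mod_small (n := n) (u.val + a) (by omega) (by omega)
  omega

lemma arc_unique (hn : 2 ≤ n) {u v : Fin n} (p : (cycleGraph n).Walk u v) :
    p.length = (v - u).val → 2 * p.length < n →
      p.edges = (List.range p.length).map
        (fun (i : ℕ) => s(u + (i : Fin n), u + (i : Fin n) + 1)) := by
  induction p with
  | nil => intro _ _; simp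
  | @cons u w v h q ih =>
      intro hlen hsmall
      rw [Walk.length_cons] at hlen hsmall
      set d := (v - u).val with hdd
      have hd1 : 1 ≤ d := by omega
      have hdn : d + 1 < n := by omega
      have h1 : (1 : Fin n).val = 1 := val_one_of hn
      rcases adj_cases hn h with hw | hw
      · -- w = u + 1, the good case
        subst hw
        have hvw : (v - (u + 1)).val = d - 1 := by
          have : v - (u + 1) = (v - u) - 1 := by ring
          rw [this, Fin.sub_def, h1]
          show (n - 1 + d) % n = d - 1
          have h5 : n - 1 + d = (d - 1) + n := by omega
          rw [h5, Nat.add_mod_right, Nat.mod_eq_of_lt (by omega)]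
        have hq := ih (by omega) (by omega)
        rw [Walk.edges_cons, hq, Walk.length_cons, List.range_succ_eq_map,
          List.map_cons, List.map_map]
        congr 1
        · simp
        · apply List.map_congr_left
          intro i _
          simp only [Function.comp_apply, Nat.succ_eq_add_one]
          congr 1 <;> (push_cast; ring)
      · -- w = u - 1, contradiction
        exfalso
        subst hw
        have hvw : (v - (u - 1)).val = d + 1 := by
          have : v - (u - 1) = (v - u) + 1 := by ring
          rw [this, Fin.add_def, h1]
          show (d + 1) % n = d + 1
          exact Nat.mod_eq_of_lt hdn
        have := minlen hn q
        rw [hvw] at this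
        omega

lemma keyNe {k A B e : ℕ} (hk : k = (n + 1) / 2) (hn : 4 ≤ n) (hA : A < n)
    (hB : B = (A + e) % n) (he1 : 1 ≤ e) (he2 : e ≤ n / 2 - 1) : A % k ≠ B % k := by
  have hk2 : 2 ≤ k := by omega
  have hen : e < n := by omega
  intro hAB
  have hlt2 : A + e < 2 * n := by omega
  rcases mod_small (n := n) (A + e) (by omega) hlt2 with ⟨h1, h2⟩ | ⟨h1, h2⟩
  · -- B = A + e
    rw [h1] at hB
    have hAB' : Nat.ModEq k A B := hAB
    have hd' : k ∣ B - A := (Nat.modEq_iff_dvd' (show A ≤ B by omega)).mp hAB'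
    have hd : k ∣ e := by rwa [show B - A = e by omega] at hd'
    have := Nat.le_of_dvd (by omega) hd
    omega
  · -- B = A + e - n
    rw [h1] at hB
    have hBA : B ≤ A := by omega
    have hAB' : Nat.ModEq k B A := hAB.symm
    have hd : k ∣ A - B := (Nat.modEq_iff_dvd' hBA).mp hAB'
    have hx1 : A - B = n - e := by omega
    obtain ⟨c, hc⟩ := hd
    have hc2 : c ≤ 1 ∨ 2 ≤ c := by omega
    rcases hc2 with hc2 | hc2
    · have : A - B ≤ k := by
        calc A - B = k * c := hc
        _ ≤ k * 1 := Nat.mul_le_mul_left k hc2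
        _ = k := by ring
      omega
    · have : 2 * k ≤ A - B := by
        calc 2 * k = k * 2 := by ring
        _ ≤ k * c := Nat.mul_le_mul_left k hc2
        _ = A - B := hc.symm
      omega

lemma castd_val {d : ℕ} (hd : d < n) : ((d : Fin n)).val = d := by
  rw [Fin.val_natCast]; exact Nat.mod_eq_of_lt hd

lemma arc_isPath (hn : 2 ≤ n) (u : Fin n) {m : ℕ} (hm : m < n) :
    (arcWalk hn u m).IsPath := by
  apply Walk.IsPath.mk'
  rw [arcWalk_support]
  refine List.Nodup.map_on ?_ List.nodup_range
  intro i hi j hj hij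
  rw [List.mem_range] at hi hj
  have := congrArg Fin.val (add_left_cancel hij)
  rw [castd_val (by omega), castd_val (by omega)] at this
  exact this

lemma val_add_cast (u : Fin n) (i : ℕ) (hi : i < n) :
    (u + (i : Fin n)).val = (u.val + i) % n := by
  rw [Fin.add_def, castd_val hi]

end Cyc

section Col
variable {n : ℕ} [NeZero n]

/-- The coloring: edge `{a, a+1}` gets color `a.val % k`. -/
noncomputable def colf (k : ℕ) (hn3 : 3 ≤ n) : Sym2 (Fin n) → ℕ :=
  Sym2.lift ⟨fun a b => if b = a + 1 then a.val % k else if a = b + 1 then b.val % k else 0, by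
    intro a b
    have hcl : ∀ x : Fin n, x + 1 + 1 ≠ x := by
      intro x hx
      have h3 := congrArg Fin.val hx
      have hv1 : (x + 1).val = (x.val + 1) % n := by
        rw [Fin.add_def, val_one_of (by omega)]
      have hv2 : (x + 1 + 1).val = ((x.val + 1) % n + 1) % n := by
        rw [Fin.add_def, val_one_of (by omega), hv1]
      rw [hv2] at h3
      have m1 := mod_small (n := n) (x.val + 1) (by omega) (by have := x.isLt; omega)
      have m2 := mod_small (n := n) ((x.val + 1) % n + 1) (by omega) (by omega)
      omega
    dsimp only
    by_cases h1 : b = a + 1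
    · subst h1
      have e1 : ¬ (a = a + 1 + 1) := fun hh => hcl a hh.symm
      rw [if_pos rfl, if_neg e1, if_pos rfl]
    · by_cases h2 : a = b + 1
      · subst h2
        have e2 : ¬ (b = b + 1 + 1) := fun hh => hcl b hh.symm
        rw [if_neg e2, if_pos rfl, if_pos rfl]
      · rw [if_neg h1, if_neg h2, if_neg (fun hh => h2 hh), if_neg (fun hh => h1 hh)]⟩

lemma colf_edge (k : ℕ) (hn3 : 3 ≤ n) (a : Fin n) :
    colf k hn3 s(a, a + 1) = a.val % k := by
  simp [colf]

lemma colf_lt (k : ℕ) (hk : 0 < k) (hn3 : 3 ≤ n) (s : Sym2 (Fin n)) :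
    colf k hn3 s < k := by
  induction s with
  | _ a b =>
    rw [colf, Sym2.lift_mk]
    dsimp only
    split
    · exact Nat.mod_lt _ hk
    · split
      · exact Nat.mod_lt _ hk
      · exact hk

lemma arc_colors_nodup (hn : 4 ≤ n) (u : Fin n) {m : ℕ} (hm : m ≤ n / 2) :
    (((arcWalk (n := n) (by omega) u m).edges.map (colf ((n+1)/2) (by omega)))).Nodup := by
  rw [arcWalk_edges, List.map_map]
  refine List.Nodup.map_on ?_ List.nodup_range
  intro i hi j hj hij
  rw [List.mem_range] at hi hj
  simp only [Function.comp_apply] at hij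
  rw [colf_edge, colf_edge] at hij
  by_contra hne
  -- wlog i < j
  wlog hlt : i < j generalizing i j
  · exact this j hj i hi hij.symm (Ne.symm hne) (by omega)
  apply keyNe (rfl : (n+1)/2 = (n+1)/2) hn ((u + (i : Fin n)).isLt)
    (B := (u + (j : Fin n)).val) (e := j - i) ?_ (by omega) (by omega) hij
  have : u + (j : Fin n) = (u + (i : Fin n)) + ((j - i : ℕ) : Fin n) := by
    rw [add_assoc, ← Nat.cast_add]
    congr 1
    congr 1
    omega
  rw [this, val_add_cast _ _ (by omega)]

end Col

section Main
variable {n : ℕ} [NeZero n]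

lemma colf_rainbow (hn : 4 ≤ n) :
    (cycleGraph n).IsRainbowConnecting (colf ((n+1)/2) (by omega)) := by
  intro u v huv
  have hn2 : (2:ℕ) ≤ n := by omega
  set d := (v - u).val with hd
  have hdn : d < n := (v - u).isLt
  have hd1 : 1 ≤ d := by
    rcases Nat.eq_zero_or_pos d with h | h
    · exfalso
      apply huv
      have h2 : v - u = 0 := Fin.ext (by rw [Fin.val_zero, ← hd, h])
      exact (sub_eq_zero.mp h2).symm
    · exact h
  have hdv : (d : Fin n) = v - u := Fin.ext (by rw [castd_val hdn])
  by_cases hcase : d ≤ n / 2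
  · have hcopy : u + (d : Fin n) = v := by rw [hdv]; ring
    refine ⟨(arcWalk hn2 u d).copy rfl hcopy, ?_, ?_⟩
    · rw [Walk.isPath_copy]
      exact arc_isPath hn2 u hdn
    · rw [Walk.edges_copy]
      exact arc_colors_nodup hn u hcase
  · set e := n - d with he
    have he2 : e ≤ n / 2 := by omega
    have hcopy : v + (e : Fin n) = u := by
      have h1 : (d : Fin n) + (e : Fin n) = 0 := by
        rw [← Nat.cast_add, show d + e = n by omega, Fin.natCast_self]
      have : v + (e : Fin n) = u + ((d : Fin n) + (e : Fin n)) := by rw [hdv]; ring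
      rw [this, h1, add_zero]
    refine ⟨((arcWalk hn2 v e).copy rfl hcopy).reverse, ?_, ?_⟩
    · exact Walk.IsPath.reverse (by rw [Walk.isPath_copy]; exact arc_isPath hn2 v (by omega))
    · rw [Walk.edges_reverse, Walk.edges_copy, List.map_reverse, List.nodup_reverse]
      exact arc_colors_nodup hn v he2

lemma colors_card_le {c : Sym2 (Fin n) → ℕ} {u v : Fin n} (p : (cycleGraph n).Walk u v)
    (hnd : (p.edges.map c).Nodup) : p.length ≤ (c '' (cycleGraph n).edgeSet).ncard := by
  classical
  have hfin : (c '' (cycleGraph n).edgeSet).Finite := ((cycleGraph n).edgeSet.toFinite).image c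
  have hsub : (p.edges.map c).toFinset ⊆ hfin.toFinset := by
    intro x hx
    rw [List.mem_toFinset] at hx
    obtain ⟨e, he, rfl⟩ := List.mem_map.mp hx
    rw [Set.Finite.mem_toFinset]
    exact ⟨e, p.edges_subset_edgeSet he, rfl⟩
  have hcard := Finset.card_le_card hsub
  rw [List.toFinset_card_of_nodup hnd, List.length_map, Walk.length_edges] at hcard
  rwa [Set.ncard_eq_toFinset_card _ hfin]

lemma lower_bound (hn : 4 ≤ n) (c : Sym2 (Fin n) → ℕ)
    (hrc : (cycleGraph n).IsRainbowConnecting c) :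
    (n + 1) / 2 ≤ (c '' (cycleGraph n).edgeSet).ncard := by
  classical
  have hn2 : (2:ℕ) ≤ n := by omega
  set m := (c '' (cycleGraph n).edgeSet).ncard with hm
  have half : n / 2 ≤ m := by
    obtain ⟨p, hp, hnd⟩ := hrc 0 ((n/2 : ℕ) : Fin n) (by
      intro h
      have := congrArg Fin.val h
      rw [Fin.val_zero, castd_val (by omega)] at this
      omega)
    have h1 := minlen hn2 p
    have hval : ((((n/2 : ℕ) : Fin n)) - 0).val = n / 2 := by
      rw [sub_zero, castd_val (by omega)]
    rw [hval] at h1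
    have h2 := colors_card_le p hnd
    omega
  rcases Nat.even_or_odd n with hpar | hpar
  · obtain ⟨r, hr⟩ := hpar
    omega
  obtain ⟨t, ht⟩ := hpar
  by_contra hcon
  push_neg at hcon
  set d := n / 2 with hdd
  have hd2 : 2 ≤ d := by omega
  have hdn : d < n := by omega
  have hmd : m = d := by omega
  -- every antipodal-ish pair is joined by the positively-oriented arc
  have hwin' : ∀ u : Fin n, ((List.range d).map (fun (i:ℕ) => c s(u + (i : Fin n), u + (i : Fin n) + 1))).Nodup := by
    intro u
    obtain ⟨p, hp, hnd⟩ := hrc u (u + (d : Fin n)) (by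
      intro h
      have h2 : (d : Fin n) = 0 := by
        have := h.symm
        nth_rewrite 2 [← add_zero u] at this
        exact add_left_cancel this
      have := congrArg Fin.val h2
      rw [castd_val hdn, Fin.val_zero] at this
      omega)
    have hvd : ((u + (d : Fin n)) - u).val = d := by
      rw [add_sub_cancel_left, castd_val hdn]
    have hlen1 := minlen hn2 p
    rw [hvd] at hlen1
    have hlen2 := colors_card_le p hnd
    have hlen : p.length = d := by omega
    have hedges := arc_unique hn2 p (by rw [hvd, hlen]) (by omega)
    rw [hlen] at hedges
    rw [hedges, List.map_map] at hnd
    exact hnd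
  have hfin : (c '' (cycleGraph n).edgeSet).Finite := ((cycleGraph n).edgeSet.toFinite).image c
  have hstep : ∀ u : Fin n, c s(u + (d : Fin n), u + (d : Fin n) + 1) = c s(u, u + 1) := by
    intro u
    set L := (List.range d).map (fun (i:ℕ) => c s(u + (i : Fin n), u + (i : Fin n) + 1)) with hL
    have hsub : L.toFinset ⊆ hfin.toFinset := by
      intro x hx
      rw [List.mem_toFinset, hL] at hx
      obtain ⟨i, hi, rfl⟩ := List.mem_map.mp hx
      rw [Set.Finite.mem_toFinset]
      exact ⟨s(u + (i : Fin n), u + (i : Fin n) + 1),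
        (SimpleGraph.mem_edgeSet _).mpr (adj_succ hn2 _), rfl⟩
    have hcard : hfin.toFinset.card ≤ L.toFinset.card := by
      rw [List.toFinset_card_of_nodup (hwin' u), List.length_map, List.length_range]
      rw [← Set.ncard_eq_toFinset_card _ hfin, ← hm]
      omega
    have heq := Finset.eq_of_subset_of_card_le hsub hcard
    have hmemL : c s(u + (d : Fin n), u + (d : Fin n) + 1) ∈ L := by
      rw [← List.mem_toFinset, heq, Set.Finite.mem_toFinset]
      exact ⟨s(u + (d : Fin n), u + (d : Fin n) + 1),
        (SimpleGraph.mem_edgeSet _).mpr (adj_succ hn2 _), rfl⟩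
    rw [hL] at hmemL
    obtain ⟨i, hi, hiE⟩ := List.mem_map.mp hmemL
    rw [List.mem_range] at hi
    rcases Nat.eq_zero_or_pos i with h0 | h0
    · rw [← hiE, h0]
      norm_num
    · exfalso
      have hinj := List.inj_on_of_nodup_map (hwin' (u + 1))
      have e1 : u + 1 + ((i - 1 : ℕ) : Fin n) = u + (i : Fin n) := by
        rw [add_assoc]
        congr 1
        rw [show (1 : Fin n) = ((1 : ℕ) : Fin n) by rw [Nat.cast_one], ← Nat.cast_add,
          show 1 + (i - 1) = i by omega]
      have e2 : u + 1 + ((d - 1 : ℕ) : Fin n) = u + (d : Fin n) := by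
        rw [add_assoc]
        congr 1
        rw [show (1 : Fin n) = ((1 : ℕ) : Fin n) by rw [Nat.cast_one], ← Nat.cast_add,
          show 1 + (d - 1) = d by omega]
      have := hinj (List.mem_range.mpr (show i - 1 < d by omega))
        (List.mem_range.mpr (show d - 1 < d by omega)) (by
          simp only [e1, e2, hiE])
      omega
  have hiter : ∀ (s : ℕ) (u : Fin n), c s(u + ((s * d : ℕ) : Fin n), u + ((s * d : ℕ) : Fin n) + 1) = c s(u, u + 1) := by
    intro s
    induction s with
    | zero => intro u; norm_num
    | succ s ih =>
        intro u
        have h1 : ((s + 1) * d : ℕ) = (s * d) + d := by ring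
        rw [h1, Nat.cast_add, ← add_assoc]
        rw [hstep (u + ((s * d : ℕ) : Fin n))]
        exact ih u
  have hcop : Nat.Coprime d n := by
    have h1 : n = 1 + 2 * d := by omega
    rw [h1]
    exact (Nat.coprime_add_mul_right_right d 1 2).mpr (Nat.coprime_one_right d)
  obtain ⟨s, -, hs⟩ := Nat.exists_mul_mod_eq_one_of_coprime hcop (by omega)
  have hone : ((s * d : ℕ) : Fin n) = 1 := by
    apply Fin.ext
    rw [Fin.val_natCast, val_one_of hn2, mul_comm]
    exact hs
  have hconst : c s(0 + (1 : Fin n), 0 + (1 : Fin n) + 1) = c s(0, (0 : Fin n) + 1) := by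
    have := hiter s 0
    rwa [hone] at this
  have hinj := List.inj_on_of_nodup_map (hwin' 0)
  have h01 : (0 : ℕ) = 1 := by
    apply hinj (List.mem_range.mpr (show 0 < d by omega)) (List.mem_range.mpr (show 1 < d by omega))
    simp only [Nat.cast_zero, Nat.cast_one]
    exact hconst.symm
  omega

end Main

theorem stmt_18 (n : ℕ) (hn : 4 ≤ n) :
    (cycleGraph n).rcNumber = (n + 1) / 2 := by
  haveI : NeZero n := ⟨by omega⟩
  classical
  set c := colf (n := n) ((n+1)/2) (by omega) with hc
  have hrc : (cycleGraph n).IsRainbowConnecting c := colf_rainbow hn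
  have hmem : (c '' (cycleGraph n).edgeSet).ncard ∈
      {m : ℕ | ∃ c' : Sym2 (Fin n) → ℕ,
        (cycleGraph n).IsRainbowConnecting c' ∧ (c' '' (cycleGraph n).edgeSet).ncard = m} :=
    ⟨c, hrc, rfl⟩
  have hub : (c '' (cycleGraph n).edgeSet).ncard ≤ (n + 1) / 2 := by
    have hsubset : c '' (cycleGraph n).edgeSet ⊆ ↑(Finset.range ((n+1)/2)) := by
      rintro x ⟨e, -, rfl⟩
      rw [Finset.coe_range, Set.mem_Iio]
      exact colf_lt _ (by omega) (by omega) e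
    calc (c '' (cycleGraph n).edgeSet).ncard
        ≤ (↑(Finset.range ((n+1)/2)) : Set ℕ).ncard :=
          Set.ncard_le_ncard hsubset (Finset.finite_toSet _)
      _ = (n + 1) / 2 := by rw [Set.ncard_coe_finset, Finset.card_range]
  rw [SimpleGraph.rcNumber]
  refine le_antisymm (le_trans (Nat.sInf_le hmem) hub) (le_csInf ⟨_, hmem⟩ ?_)
  rintro m ⟨c', hc', rfl⟩
  exact lower_bound hn c' hc'
end
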